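/- arXiv:2007.09768 — 7 statements merged into one kernel-verified Lean document; each statement's English description precedes it below -/
import Mathlib

section
/- Let c ≥ 1, ℓ ≥ 0, k ≥ 1, and let G be a finite simple graph on n vertices whose complement is c-closed. Then the number of sets S ⊆ V(G) such that the induced subgraph G[S] admits a good (ℓ,k)-partition is at most n^{ℓ+2k} · 2^{k(c−1)}. -/
/-- A graph is `c`-closed if every two distinct non-adjacent vertices have at
most `c - 1` common neighbors. -/
def CClosed {V : Type*} (G : SimpleGraph V) (c : ℕ) : Prop :=
  ∀ u v : V, u ≠ v → ¬ G.Adj u v →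
    (G.neighborSet u ∩ G.neighborSet v).ncard ≤ c - 1

/-- `H` admits a good `(ℓ, k)`-partition: there are `k` edges
`eᵢ = (a i, b i)` and a partition `A 0, A 1, …, A k` of the vertices not
incident to any of these edges such that `|A 0| ≤ ℓ` and, for `i ≥ 1`, no
vertex of `A i` is adjacent to an endpoint of `eᵢ`. -/
def HasGoodPartition {V : Type*} (H : SimpleGraph V) (ℓ k : ℕ) : Prop :=
  ∃ (a b : Fin k → V) (A : Fin (k + 1) → Set V),
    (∀ i, H.Adj (a i) (b i)) ∧
    (∀ i j, i ≠ j → Disjoint (A i) (A j)) ∧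
    ((⋃ i, A i) = {v | ∀ i, v ≠ a i ∧ v ≠ b i}) ∧
    (A 0).ncard ≤ ℓ ∧
    (∀ i : Fin k, ∀ v ∈ A i.succ, ¬ H.Adj v (a i) ∧ ¬ H.Adj v (b i))

namespace Stmt6Aux

variable {V : Type*}

/-- The common non-neighbors of `u` and `v`, other than `u, v` themselves. -/
def Tset (G : SimpleGraph V) (u v : V) : Set V :=
  {w | w ≠ u ∧ w ≠ v ∧ ¬ G.Adj w u ∧ ¬ G.Adj w v}

open Classical in
/-- A fixed "labelling" of `Tset G u v` by `Fin (c-1)`, injective whenever an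
embedding exists. -/
noncomputable def Fmap (G : SimpleGraph V) (c : ℕ) (u v : V) (x : Tset G u v) :
    Fin (c - 1) ⊕ Unit :=
  if h : Nonempty (Tset G u v ↪ Fin (c - 1)) then Sum.inl (Classical.choice h x)
  else Sum.inr ()

open Classical in
/-- Encode a subset `A` of `Tset G u v` as a bit-vector of length `c - 1`. -/
noncomputable def codeOf (G : SimpleGraph V) (c : ℕ) (u v : V) (A : Set V)
    (j : Fin (c - 1)) : Bool :=
  if ∃ w, ∃ h : w ∈ Tset G u v, w ∈ A ∧ Fmap G c u v ⟨w, h⟩ = Sum.inl j then true else false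

lemma codeOf_eq_true_iff (G : SimpleGraph V) (c : ℕ) (u v : V) (A : Set V)
    (j : Fin (c - 1)) :
    codeOf G c u v A j = true ↔
      ∃ w, ∃ h : w ∈ Tset G u v, w ∈ A ∧ Fmap G c u v ⟨w, h⟩ = Sum.inl j := by
  unfold codeOf; split <;> simp_all

/-- Decode a bit-vector back to a subset of `Tset G u v`. -/
def decodeA (G : SimpleGraph V) (c : ℕ) (u v : V) (code : Fin (c - 1) → Bool) : Set V :=
  {w | ∃ h : w ∈ Tset G u v, ∃ j, Fmap G c u v ⟨w, h⟩ = Sum.inl j ∧ code j = true}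

lemma decode_codeOf (G : SimpleGraph V) (c : ℕ) (u v : V) (A : Set V)
    (hne : Nonempty (Tset G u v ↪ Fin (c - 1))) (hA : A ⊆ Tset G u v) :
    decodeA G c u v (codeOf G c u v A) = A := by
  have hF : ∀ x : Tset G u v, Fmap G c u v x = Sum.inl (Classical.choice hne x) := by
    intro x; simp [Fmap, hne]
  have hFinj : Function.Injective (Fmap G c u v) := by
    intro x y hxy
    rw [hF, hF] at hxy
    exact (Classical.choice hne).injective (Sum.inl.inj hxy)
  ext w
  constructor
  · rintro ⟨hw, j, hj, hc⟩
    rw [codeOf_eq_true_iff] at hc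
    obtain ⟨w', hw', hwA', hj'⟩ := hc
    have : (⟨w', hw'⟩ : Tset G u v) = ⟨w, hw⟩ := hFinj (hj'.trans hj.symm)
    rwa [show w' = w from congrArg Subtype.val this] at hwA'
  · intro hwA
    have hw : w ∈ Tset G u v := hA hwA
    refine ⟨hw, Classical.choice hne ⟨w, hw⟩, hF _, ?_⟩
    rw [codeOf_eq_true_iff]
    exact ⟨w, hw, hwA, hF _⟩

lemma exists_emb {m : ℕ} [Fintype V] (T : Set V) (h : T.ncard ≤ m) :
    Nonempty (T ↪ Fin m) := by
  classical
  have : Fintype.card T ≤ Fintype.card (Fin m) := by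
    rw [← Nat.card_eq_fintype_card, Nat.card_coe_set_eq, Fintype.card_fin]; exact h
  exact Function.Embedding.nonempty_of_card_le this

lemma exists_cover {m : ℕ} [Fintype V] (T : Set V) (d : V) (h : T.ncard ≤ m) :
    ∃ g : Fin m → V, T ⊆ Set.range g ∧ Set.range g ⊆ insert d T := by
  classical
  obtain ⟨e⟩ := exists_emb T h
  refine ⟨fun j => if h : ∃ x : T, e x = j then (Classical.choose h : T).1 else d, ?_, ?_⟩
  · intro t ht
    refine ⟨e ⟨t, ht⟩, ?_⟩
    beta_reduce
    rw [dif_pos (⟨⟨t, ht⟩, rfl⟩ : ∃ x : T, e x = e ⟨t, ht⟩)]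
    have := Classical.choose_spec (⟨⟨t, ht⟩, rfl⟩ : ∃ x : T, e x = e ⟨t, ht⟩)
    rw [e.injective this]
  · rintro x ⟨j, rfl⟩
    by_cases h : ∃ x : T, e x = j
    · beta_reduce
      rw [dif_pos h]
      exact Set.mem_insert_of_mem _ (Classical.choose h).2
    · beta_reduce
      rw [dif_neg h]
      exact Set.mem_insert _ _

end Stmt6Aux

open Stmt6Aux in
/-- In the complement `G` of a `c`-closed graph on `n` vertices, the number of
sets `S` whose induced subgraph admits a good `(ℓ, k)`-partition is at most
`n^(ℓ+2k) · 2^(k(c-1))`. -/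
theorem stmt_6 {V : Type*} [Fintype V] (G : SimpleGraph V) (c ℓ k n : ℕ)
    (hc : 1 ≤ c) (hk : 1 ≤ k) (hn : Fintype.card V = n)
    (hclosed : CClosed Gᶜ c) :
    {S : Set V | HasGoodPartition (G.induce S) ℓ k}.ncard
      ≤ n ^ (ℓ + 2 * k) * 2 ^ (k * (c - 1)) := by
  classical
  set s : Set (Set V) := {S : Set V | HasGoodPartition (G.induce S) ℓ k} with hs
  have hx : ∀ x : s, HasGoodPartition (G.induce (x : Set V)) ℓ k := fun x => x.2
  unfold HasGoodPartition at hx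
  choose a b A hab hdisj hunion hA0 hadj using hx
  set i0 : Fin k := ⟨0, hk⟩ with hi0
  set aV : s → Fin k → V := fun x i => (a x i : V) with haV
  set bV : s → Fin k → V := fun x i => (b x i : V) with hbV
  set A0 : s → Set V := fun x => Subtype.val '' (A x 0) with hA0'
  set Ai : s → Fin k → Set V := fun x i => Subtype.val '' (A x i.succ) with hAi
  -- basic adjacency facts
  have hadjG : ∀ (x : s) (i : Fin k), G.Adj (aV x i) (bV x i) := by
    intro x i; have := hab x i; simpa using this
  -- size bound on the common non-neighbor sets
  have hTb : ∀ (x : s) (i : Fin k), (Tset G (aV x i) (bV x i)).ncard ≤ c - 1 := by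
    intro x i
    have h := hadjG x i
    have h2 : ¬ Gᶜ.Adj (aV x i) (bV x i) := by simp [SimpleGraph.compl_adj, h]
    have hcl := hclosed _ _ h.ne h2
    have heq : Gᶜ.neighborSet (aV x i) ∩ Gᶜ.neighborSet (bV x i)
        = Tset G (aV x i) (bV x i) := by
      ext w
      simp only [Set.mem_inter_iff, SimpleGraph.mem_neighborSet, SimpleGraph.compl_adj, Tset,
        Set.mem_setOf_eq]
      constructor
      · rintro ⟨⟨h1, h2⟩, h3, h4⟩
        exact ⟨h1.symm, h3.symm, fun hh => h2 hh.symm, fun hh => h4 hh.symm⟩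
      · rintro ⟨h1, h2, h3, h4⟩
        exact ⟨⟨h1.symm, fun hh => h3 hh.symm⟩, h2.symm, fun hh => h4 hh.symm⟩
    rwa [heq] at hcl
  have hne : ∀ (x : s) (i : Fin k),
      Nonempty (↥(Tset G (aV x i) (bV x i)) ↪ Fin (c - 1)) :=
    fun x i => exists_emb _ (hTb x i)
  -- the parts `A (i+1)` consist of common non-neighbors of `a i, b i`
  have hAsub : ∀ (x : s) (i : Fin k), Ai x i ⊆ Tset G (aV x i) (bV x i) := by
    rintro x i w ⟨v, hv, rfl⟩
    have hvU : v ∈ ⋃ j, A x j := Set.mem_iUnion.2 ⟨i.succ, hv⟩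
    rw [hunion x] at hvU
    have hne' := hvU i
    have hadj' := hadj x i v hv
    refine ⟨fun h => hne'.1 (Subtype.ext h), fun h => hne'.2 (Subtype.ext h), ?_, ?_⟩
    · intro h; exact hadj'.1 (by simpa using h)
    · intro h; exact hadj'.2 (by simpa using h)
  -- facts about `A 0`
  have hA0card : ∀ x : s, (A0 x).ncard ≤ ℓ := by
    intro x
    rw [hA0']
    rw [Set.ncard_image_of_injective _ Subtype.val_injective]
    exact hA0 x
  have hA0nd : ∀ x : s, aV x i0 ∉ A0 x := by
    rintro x ⟨v, hv, hveq⟩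
    have hvU : v ∈ ⋃ j, A x j := Set.mem_iUnion.2 ⟨0, hv⟩
    rw [hunion x] at hvU
    exact (hvU i0).1 (Subtype.ext hveq)
  have hg : ∀ x : s, ∃ g : Fin ℓ → V,
      A0 x ⊆ Set.range g ∧ Set.range g ⊆ insert (aV x i0) (A0 x) :=
    fun x => exists_cover _ _ (hA0card x)
  choose g hg1 hg2 using hg
  have hA0rec : ∀ x : s, Set.range (g x) \ {aV x i0} = A0 x := by
    intro x
    ext w
    constructor
    · rintro ⟨hw, hwne⟩
      rcases Set.mem_insert_iff.1 (hg2 x hw) with h | h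
      · exact absurd (Set.mem_singleton_iff.2 h) hwne
      · exact h
    · intro hw
      exact ⟨hg1 x hw, fun h => hA0nd x ((Set.mem_singleton_iff.1 h) ▸ hw)⟩
  set code : s → Fin k → Fin (c - 1) → Bool :=
    fun x i => codeOf G c (aV x i) (bV x i) (Ai x i) with hcode
  have hdec : ∀ (x : s) (i : Fin k),
      decodeA G c (aV x i) (bV x i) (code x i) = Ai x i :=
    fun x i => decode_codeOf _ _ _ _ _ (hne x i) (hAsub x i)
  -- the encoding map
  set φ : s → (Fin k → V) × (Fin k → V) × (Fin ℓ → V) × (Fin k → Fin (c - 1) → Bool) :=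
    fun x => (aV x, bV x, g x, code x) with hφ
  -- recover `S` from its code
  have hrec : ∀ x : s, (x : Set V) =
      Set.range (aV x) ∪ Set.range (bV x) ∪ (Set.range (g x) \ {aV x i0}) ∪
        ⋃ i : Fin k, decodeA G c (aV x i) (bV x i) (code x i) := by
    intro x
    rw [hA0rec x, Set.iUnion_congr (hdec x)]
    ext w
    simp only [Set.mem_union, Set.mem_iUnion, Set.mem_range]
    constructor
    · intro hw
      by_cases hcase : ∃ i, (⟨w, hw⟩ : (x : Set V)) = a x i ∨ (⟨w, hw⟩ : (x : Set V)) = b x i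
      · obtain ⟨i, hi | hi⟩ := hcase
        · exact Or.inl (Or.inl (Or.inl ⟨i, (congrArg Subtype.val hi).symm⟩))
        · exact Or.inl (Or.inl (Or.inr ⟨i, (congrArg Subtype.val hi).symm⟩))
      · push_neg at hcase
        have hmem : (⟨w, hw⟩ : (x : Set V)) ∈ ⋃ j, A x j := by
          rw [hunion x]; exact hcase
        obtain ⟨j, hj⟩ := Set.mem_iUnion.1 hmem
        rcases Fin.eq_zero_or_eq_succ j with rfl | ⟨i, rfl⟩
        · exact Or.inl (Or.inr ⟨⟨w, hw⟩, hj, rfl⟩)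
        · exact Or.inr ⟨i, ⟨⟨w, hw⟩, hj, rfl⟩⟩
    · rintro (((⟨i, rfl⟩ | ⟨i, rfl⟩) | ⟨v, _, rfl⟩) | ⟨i, v, _, rfl⟩)
      · exact (a x i).2
      · exact (b x i).2
      · exact v.2
      · exact v.2
  have hinj : Function.Injective φ := by
    intro x y hxy
    have h1 : aV x = aV y := congrArg Prod.fst hxy
    have h2 : bV x = bV y := congrArg (fun p => p.2.1) hxy
    have h3 : g x = g y := congrArg (fun p => p.2.2.1) hxy
    have h4 : code x = code y := congrArg (fun p => p.2.2.2) hxy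
    apply Subtype.ext
    rw [hrec x, hrec y, h1, h2, h3, h4]
  have hcard := Nat.card_le_card_of_injective φ hinj
  rw [Nat.card_coe_set_eq] at hcard
  refine hcard.trans ?_
  rw [Nat.card_eq_fintype_card]
  simp only [Fintype.card_prod, Fintype.card_fun, Fintype.card_fin, Fintype.card_bool, hn]
  ring_nf
  exact le_refl _
end

section
/- Let t ∈ ℕ and let H be a finite simple graph of treewidth at most t. Then H is a proper (t+1)-star or H admits a good (t,2)-partition. -/
open SimpleGraph Walk

section TreeLemmas

variable {ι : Type} {T : SimpleGraph ι}

/-- The unique path between two vertices of a tree. -/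
noncomputable def pth (hT : T.IsTree) (i j : ι) : T.Walk i j :=
  (hT.existsUnique_path i j).choose

lemma pth_isPath (hT : T.IsTree) (i j : ι) : (pth hT i j).IsPath :=
  (hT.existsUnique_path i j).choose_spec.1

lemma pth_unique (hT : T.IsTree) {i j : ι} (p : T.Walk i j) (hp : p.IsPath) :
    p = pth hT i j :=
  (hT.existsUnique_path i j).choose_spec.2 p hp

lemma pth_reverse (hT : T.IsTree) (i j : ι) : (pth hT i j).reverse = pth hT j i :=
  pth_unique hT _ ((pth_isPath hT i j).reverse)

lemma mem_pth_symm (hT : T.IsTree) {i j x : ι} (h : x ∈ (pth hT i j).support) :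
    x ∈ (pth hT j i).support := by
  rw [← pth_reverse hT i j, Walk.support_reverse, List.mem_reverse]
  exact h

lemma pth_takeUntil (hT : T.IsTree) [DecidableEq ι] {i j m : ι}
    (h : m ∈ (pth hT i j).support) :
    (pth hT i j).takeUntil m h = pth hT i m :=
  pth_unique hT _ ((pth_isPath hT i j).takeUntil h)

lemma pth_dropUntil (hT : T.IsTree) [DecidableEq ι] {i j m : ι}
    (h : m ∈ (pth hT i j).support) :
    (pth hT i j).dropUntil m h = pth hT m j :=
  pth_unique hT _ ((pth_isPath hT i j).dropUntil h)

lemma pth_length_seg (hT : T.IsTree) {i j m : ι} (h : m ∈ (pth hT i j).support) :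
    (pth hT i m).length + (pth hT m j).length = (pth hT i j).length := by
  classical
  have h2 := congrArg Walk.length ((pth hT i j).take_spec h)
  rw [Walk.length_append, pth_takeUntil hT h, pth_dropUntil hT h] at h2
  exact h2

lemma pth_support_seg (hT : T.IsTree) {i j m : ι} (h : m ∈ (pth hT i j).support) :
    ∀ x ∈ (pth hT m j).support, x ∈ (pth hT i j).support := by
  classical
  intro x hx
  rw [← pth_dropUntil hT h] at hx
  exact Walk.support_dropUntil_subset _ h hx

lemma pth_triangle (hT : T.IsTree) (i j k : ι) {x : ι} (hx : x ∈ (pth hT i j).support) :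
    x ∈ (pth hT i k).support ∨ x ∈ (pth hT k j).support := by
  classical
  have hb := pth_unique hT _ (((pth hT i k).append (pth hT k j)).bypass_isPath)
  rw [← hb] at hx
  have h2 := Walk.support_bypass_subset _ hx
  rwa [Walk.mem_support_append_iff] at h2

lemma isPath_append_of {i j k : ι} {p : T.Walk i j} {q : T.Walk j k}
    (hp : p.IsPath) (hq : q.IsPath) (hint : ∀ y ∈ p.support, y ∈ q.support → y = j) :
    (p.append q).IsPath := by
  rw [Walk.isPath_def, Walk.support_append, List.nodup_append]
  have hq' := hq.support_nodup
  have hcons := q.support_eq_cons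
  rw [hcons, List.nodup_cons] at hq'
  refine ⟨hp.support_nodup, hq'.2, ?_⟩
  intro a ha a' hat heq
  subst heq
  have haq : a ∈ q.support := by rw [hcons]; exact List.mem_cons_of_mem _ hat
  have haj := hint a ha haq
  subst haj
  exact hq'.1 hat

lemma exists_gate_on_walk (hT : T.IsTree) (X : Set ι) {i j : ι} (p : T.Walk i j) :
    p.IsPath → j ∈ X →
    ∃ m, m ∈ p.support ∧ m ∈ X ∧ ∀ y ∈ (pth hT i m).support, y ∈ X → y = m := by
  classical
  induction p with
  | nil =>
    rename_i u
    intro _ hj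
    refine ⟨u, Walk.start_mem_support _, hj, fun y hy _ => ?_⟩
    have hnil := pth_unique hT (Walk.nil : T.Walk u u) Walk.IsPath.nil
    rw [← hnil] at hy
    simpa using hy
  | cons h p ih =>
    rename_i u v w
    intro hp hj
    rw [Walk.cons_isPath_iff] at hp
    by_cases hu : u ∈ X
    · refine ⟨u, Walk.start_mem_support _, hu, fun y hy _ => ?_⟩
      have hnil := pth_unique hT (Walk.nil : T.Walk u u) Walk.IsPath.nil
      rw [← hnil] at hy
      simpa using hy
    · obtain ⟨m, hm, hmX, hcond⟩ := ih hp.1 hj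
      have hsub : ∀ x ∈ (pth hT v m).support, x ∈ p.support := by
        intro x hx
        have heq := pth_unique hT (p.takeUntil m hm) (hp.1.takeUntil hm)
        rw [← heq] at hx
        exact Walk.support_takeUntil_subset _ hm hx
      have hnotin : u ∉ (pth hT v m).support := fun hx => hp.2 (hsub u hx)
      have hpath : (Walk.cons h (pth hT v m)).IsPath := by
        rw [Walk.cons_isPath_iff]
        exact ⟨pth_isPath hT v m, hnotin⟩
      have heq := pth_unique hT _ hpath
      refine ⟨m, ?_, hmX, ?_⟩
      · rw [Walk.support_cons]
        exact List.mem_cons_of_mem _ hm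
      · intro y hy hyX
        rw [← heq, Walk.support_cons] at hy
        rcases List.mem_cons.mp hy with rfl | hy'
        · exact absurd hyX hu
        · exact hcond y hy' hyX

lemma tree_median (hT : T.IsTree) (a b c : ι) :
    ∃ m, m ∈ (pth hT a b).support ∧ m ∈ (pth hT a c).support ∧
      m ∈ (pth hT b c).support := by
  obtain ⟨m, hm1, hm2, hcond⟩ := exists_gate_on_walk hT {x | x ∈ (pth hT a c).support}
      (pth hT b a) (pth_isPath hT b a) (Walk.start_mem_support _)
  have hmc : ∀ x ∈ (pth hT m c).support, x ∈ (pth hT a c).support :=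
    pth_support_seg hT hm2
  have happ : ((pth hT b m).append (pth hT m c)).IsPath :=
    isPath_append_of (pth_isPath _ _ _) (pth_isPath _ _ _)
      (fun y hy hy' => hcond y hy (hmc y hy'))
  have heq := pth_unique hT _ happ
  refine ⟨m, mem_pth_symm hT hm1, hm2, ?_⟩
  rw [← heq, Walk.mem_support_append_iff]
  exact Or.inl (Walk.end_mem_support _)

/-- A set of tree nodes closed under taking (unique) paths. -/
def PClosed (hT : T.IsTree) (S : Set ι) : Prop :=
  ∀ i ∈ S, ∀ j ∈ S, ∀ x ∈ (pth hT i j).support, x ∈ S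

lemma gate_to_subtree (hT : T.IsTree) {S : Set ι} (hS : PClosed hT S)
    (hne : S.Nonempty) (z : ι) :
    ∃ g ∈ S, ∀ j ∈ S, g ∈ (pth hT z j).support := by
  classical
  obtain ⟨g₀, hg₀⟩ := hne
  have hex : ∃ n, ∃ g, g ∈ S ∧ (pth hT z g).length = n := ⟨_, g₀, hg₀, rfl⟩
  obtain ⟨g, hg, hlen⟩ := Nat.find_spec hex
  refine ⟨g, hg, fun j hj => ?_⟩
  obtain ⟨m, h1, h2, h3⟩ := tree_median hT z g j
  have hmS : m ∈ S := hS g hg j hj m h3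
  have hadd := pth_length_seg hT h1
  have hmin : Nat.find hex ≤ (pth hT z m).length := Nat.find_min' hex ⟨m, hmS, rfl⟩
  have h0 : (pth hT m g).length = 0 := by omega
  have hmg := Walk.eq_of_length_eq_zero h0
  rw [← hmg]
  exact h2

lemma gate_disjoint (hT : T.IsTree) {Q₁ Q₂ : Set ι} (h1 : PClosed hT Q₁)
    (h2 : PClosed hT Q₂) (hne1 : Q₁.Nonempty) (hne2 : Q₂.Nonempty)
    (hd : ∀ y, y ∈ Q₁ → y ∈ Q₂ → False) :
    ∃ x ∈ Q₁, ∀ j₁ ∈ Q₁, ∀ j₂ ∈ Q₂, x ∈ (pth hT j₁ j₂).support := by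
  classical
  obtain ⟨x₀, hx₀⟩ := hne1
  obtain ⟨y₀, hy₀⟩ := hne2
  have hex : ∃ n, ∃ g y, g ∈ Q₁ ∧ y ∈ Q₂ ∧ (pth hT g y).length = n :=
    ⟨_, x₀, y₀, hx₀, hy₀, rfl⟩
  obtain ⟨x, y, hx, hy, hlen⟩ := Nat.find_spec hex
  have hmin : ∀ x' ∈ Q₁, ∀ y' ∈ Q₂, (pth hT x y).length ≤ (pth hT x' y').length := by
    intro x' hx' y' hy'
    rw [hlen]
    exact Nat.find_min' hex ⟨x', y', hx', hy', rfl⟩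
  have claimB : ∀ j₂ ∈ Q₂, ∀ w, w ∈ Q₁ → w ∈ (pth hT x j₂).support → w = x := by
    intro j₂ hj₂ w hw hwsup
    rcases pth_triangle hT x j₂ y hwsup with hcase | hcase
    · have hadd := pth_length_seg hT hcase
      have hm := hmin w hw y hy
      have h0 : (pth hT x w).length = 0 := by omega
      exact (Walk.eq_of_length_eq_zero h0).symm
    · exact absurd (h2 y hy j₂ hj₂ w hcase) (fun hq => hd w hw hq)
  refine ⟨x, hx, fun j₁ hj₁ j₂ hj₂ => ?_⟩
  obtain ⟨m, m1, m2, m3⟩ := tree_median hT x j₁ j₂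
  have hmQ₁ : m ∈ Q₁ := h1 x hx j₁ hj₁ m m1
  have hmx := claimB j₂ hj₂ m hmQ₁ m2
  rw [← hmx]
  exact m3

lemma helly3 (hT : T.IsTree) {S₁ S₂ S₃ : Set ι} (h1 : PClosed hT S₁)
    (h2 : PClosed hT S₂) (h3 : PClosed hT S₃)
    (h12 : (S₁ ∩ S₂).Nonempty) (h13 : (S₁ ∩ S₃).Nonempty) (h23 : (S₂ ∩ S₃).Nonempty) :
    ∃ z, z ∈ S₁ ∧ z ∈ S₂ ∧ z ∈ S₃ := by
  obtain ⟨a, ha2, ha3⟩ := h23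
  obtain ⟨b, hb1, hb3⟩ := h13
  obtain ⟨c, hc1, hc2⟩ := h12
  obtain ⟨m, m1, m2, m3⟩ := tree_median hT a b c
  exact ⟨m, h1 b hb1 c hc1 m m3, h2 a ha2 c hc2 m m2, h3 a ha3 b hb3 m m1⟩

lemma helly (hT : T.IsTree) {α : Type*} [DecidableEq α] :
    ∀ (n : ℕ) (F : Finset α) (Q : α → Set ι), F.card = n →
      (∀ a ∈ F, PClosed hT (Q a)) →
      (∀ a ∈ F, ∀ b ∈ F, (Q a ∩ Q b).Nonempty) → F.Nonempty →
      ∃ z, ∀ a ∈ F, z ∈ Q a := by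
  intro n
  induction n using Nat.strong_induction_on with
  | _ n ih =>
    intro F Q hcard hPC hint hne
    by_cases h1 : F.card ≤ 1
    · obtain ⟨a, ha⟩ := hne
      obtain ⟨z, hz, -⟩ := hint a ha a ha
      refine ⟨z, fun b hb => ?_⟩
      have hba : b = a := Finset.card_le_one.mp h1 b hb a ha
      rw [hba]
      exact hz
    · have h2 : 1 < F.card := by omega
      obtain ⟨a₁, ha₁, a₂, ha₂, hne12⟩ := Finset.one_lt_card.mp h2
      set F' := F.erase a₁ with hF'
      set Q' := Function.update Q a₂ (Q a₁ ∩ Q a₂) with hQ'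
      have ha₂' : a₂ ∈ F' := Finset.mem_erase.mpr ⟨Ne.symm hne12, ha₂⟩
      have hcard' : F'.card < n := by
        rw [← hcard, hF', Finset.card_erase_of_mem ha₁]
        omega
      have hPC' : ∀ b ∈ F', PClosed hT (Q' b) := by
        intro b hb
        by_cases hb2 : b = a₂
        · rw [hb2, hQ', Function.update_self]
          intro i hi j hj x hx
          exact ⟨hPC a₁ ha₁ i hi.1 j hj.1 x hx, hPC a₂ ha₂ i hi.2 j hj.2 x hx⟩
        · rw [hQ', Function.update_of_ne hb2]
          exact hPC b (Finset.mem_of_mem_erase hb)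
      have hint' : ∀ b ∈ F', ∀ c ∈ F', (Q' b ∩ Q' c).Nonempty := by
        intro b hb c hc
        have hbF := Finset.mem_of_mem_erase hb
        have hcF := Finset.mem_of_mem_erase hc
        by_cases hb2 : b = a₂ <;> by_cases hc2 : c = a₂
        · rw [hb2, hc2, hQ', Function.update_self]
          obtain ⟨z, hz1, hz2⟩ := hint a₁ ha₁ a₂ ha₂
          exact ⟨z, ⟨hz1, hz2⟩, ⟨hz1, hz2⟩⟩
        · rw [hb2, hQ', Function.update_self, Function.update_of_ne hc2]
          obtain ⟨z, hz1, hz2, hz3⟩ := helly3 hT (hPC a₁ ha₁) (hPC a₂ ha₂) (hPC c hcF)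
            (hint a₁ ha₁ a₂ ha₂) (hint a₁ ha₁ c hcF) (hint a₂ ha₂ c hcF)
          exact ⟨z, ⟨hz1, hz2⟩, hz3⟩
        · rw [hc2, hQ', Function.update_self, Function.update_of_ne hb2]
          obtain ⟨z, hz1, hz2, hz3⟩ := helly3 hT (hPC a₁ ha₁) (hPC a₂ ha₂) (hPC b hbF)
            (hint a₁ ha₁ a₂ ha₂) (hint a₁ ha₁ b hbF) (hint a₂ ha₂ b hbF)
          exact ⟨z, hz3, hz1, hz2⟩
        · rw [hQ', Function.update_of_ne hb2, Function.update_of_ne hc2]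
          exact hint b hbF c hcF
      obtain ⟨z, hz⟩ := ih F'.card hcard' F' Q' rfl hPC' hint' ⟨a₂, ha₂'⟩
      refine ⟨z, fun b hb => ?_⟩
      by_cases hb1 : b = a₁
      · have hz2 := hz a₂ ha₂'
        rw [hQ', Function.update_self] at hz2
        rw [hb1]
        exact hz2.1
      · have hz2 := hz b (Finset.mem_erase.mpr ⟨hb1, hb⟩)
        by_cases hb2 : b = a₂
        · rw [hb2] at hz2 ⊢
          rw [hQ', Function.update_self] at hz2
          exact hz2.2
        · rwa [hQ', Function.update_of_ne hb2] at hz2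

end TreeLemmas

/-- `H` has treewidth at most `t`: there is a tree decomposition of `H` all of
whose bags have at most `t + 1` vertices. -/
def HasTreewidthLE {V : Type*} (H : SimpleGraph V) (t : ℕ) : Prop :=
  ∃ (ι : Type) (T : SimpleGraph ι) (B : ι → Set V),
    T.IsTree ∧
    (∀ v : V, ∃ i, v ∈ B i) ∧
    (∀ u v : V, H.Adj u v → ∃ i, u ∈ B i ∧ v ∈ B i) ∧
    (∀ (i j : ι) (p : T.Walk i j), p.IsPath → ∀ x ∈ p.support, B i ∩ B j ⊆ B x) ∧
    (∀ i, (B i).ncard ≤ t + 1)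

/-- `H` is a proper `k`-star: its vertices can be split into a head `A` with
`|A| ≤ k` and an independent set of tails, each tail being adjacent to at most
`k - 1` head vertices. -/
def IsProperKStar {V : Type*} (H : SimpleGraph V) (k : ℕ) : Prop :=
  ∃ A : Set V, A.ncard ≤ k ∧
    (∀ u ∉ A, ∀ v ∉ A, ¬ H.Adj u v) ∧
    (∀ v ∉ A, ({a ∈ A | H.Adj v a}).ncard ≤ k - 1)

/-- Every finite graph of treewidth at most `t` is a proper `(t+1)`-star or
admits a good `(t, 2)`-partition. -/
theorem stmt_7 {V : Type*} [Fintype V] (H : SimpleGraph V) (t : ℕ)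
    (htw : HasTreewidthLE H t) :
    IsProperKStar H (t + 1) ∨ HasGoodPartition H t 2 := by
  classical
  obtain ⟨ι, T, B, hT, hcover, hedge, hcoh, hcard⟩ := htw
  set S : V → Set ι := fun v => {i | v ∈ B i} with hSdef
  have hSne : ∀ v, (S v).Nonempty := fun v => hcover v
  have hSPC : ∀ v, PClosed hT (S v) := by
    intro v i hi j hj x hx
    exact hcoh i j (pth hT i j) (pth_isPath hT i j) x hx ⟨hi, hj⟩
  have hUPC : ∀ u v : V, H.Adj u v → PClosed hT (S u ∪ S v) := by
    intro u v huv
    obtain ⟨c, hcu, hcv⟩ := hedge u v huv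
    intro i hi j hj x hx
    rcases pth_triangle hT i j c hx with h | h
    · rcases hi with hi | hi
      · exact Or.inl (hSPC u i hi c hcu x h)
      · exact Or.inr (hSPC v i hi c hcv x h)
    · rcases hj with hj | hj
      · exact Or.inl (hSPC u c hcu j hj x h)
      · exact Or.inr (hSPC v c hcv j hj x h)
  set F : Finset (V × V) := Finset.univ.filter (fun p => H.Adj p.1 p.2) with hFdef
  have hmemF : ∀ p : V × V, p ∈ F ↔ H.Adj p.1 p.2 := by
    intro p
    simp [hFdef]
  set Q : V × V → Set ι := fun p => S p.1 ∪ S p.2 with hQdef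
  have hQPC : ∀ p ∈ F, PClosed hT (Q p) := fun p hp => hUPC _ _ ((hmemF p).mp hp)
  by_cases hcase : ∀ p ∈ F, ∀ q ∈ F, (Q p ∩ Q q).Nonempty
  · left
    by_cases hne : F.Nonempty
    · haveI : DecidableEq (V × V) := Classical.decEq _
      obtain ⟨z, hz⟩ := helly (α := V × V) hT F.card F Q rfl hQPC hcase hne
      refine ⟨B z, hcard z, ?_, ?_⟩
      · intro u hu v hv huv
        rcases hz (u, v) ((hmemF _).mpr huv) with h | h
        · exact hu h
        · exact hv h
      · intro v hv
        obtain ⟨g, hgS, hgate⟩ := gate_to_subtree hT (hSPC v) (hSne v) z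
        have hsub : {a ∈ B z | H.Adj v a} ⊆ B g \ {v} := by
          rintro a ⟨haz, hav⟩
          obtain ⟨j, hvj, haj⟩ := hedge v a hav
          have hjS : j ∈ S v := hvj
          have hgj := hgate j hjS
          refine ⟨hcoh z j (pth hT z j) (pth_isPath hT z j) g hgj ⟨haz, haj⟩, ?_⟩
          simp only [Set.mem_singleton_iff]
          exact hav.ne'
        have hvg : v ∈ B g := hgS
        calc ({a ∈ B z | H.Adj v a}).ncard
            ≤ (B g \ {v}).ncard := Set.ncard_le_ncard hsub (Set.toFinite _)
          _ = (B g).ncard - 1 := Set.ncard_diff_singleton_of_mem hvg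
          _ ≤ t + 1 - 1 := by
              have := hcard g
              omega
    · refine ⟨∅, by simp, ?_, ?_⟩
      · intro u _ v _ huv
        exact hne ⟨(u, v), (hmemF _).mpr huv⟩
      · intro v _
        have hempty : {a ∈ (∅ : Set V) | H.Adj v a} = ∅ := by simp
        rw [hempty, Set.ncard_empty]
        omega
  · right
    push_neg at hcase
    obtain ⟨p, hp, q, hq, hpq⟩ := hcase
    obtain ⟨u, b⟩ := p
    obtain ⟨w, d⟩ := q
    have hub : H.Adj u b := (hmemF _).mp hp
    have hwd : H.Adj w d := (hmemF _).mp hq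
    have hdisj : ∀ y, y ∈ Q (u, b) → y ∈ Q (w, d) → False := by
      intro y h1 h2
      have hy : y ∈ Q (u, b) ∩ Q (w, d) := ⟨h1, h2⟩
      rw [hpq] at hy
      exact hy
    obtain ⟨x, hxQ, hxgate⟩ := gate_disjoint hT (hQPC _ hp) (hQPC _ hq)
      ((hSne u).imp fun i hi => Or.inl hi) ((hSne w).imp fun i hi => Or.inl hi) hdisj
    have hkey : ∀ v : V, (H.Adj v u ∨ H.Adj v b) → (H.Adj v w ∨ H.Adj v d) → v ∈ B x := by
      intro v hv1 hv2
      obtain ⟨j₁, hj₁Q, hvj₁⟩ : ∃ j₁, j₁ ∈ Q (u, b) ∧ v ∈ B j₁ := by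
        rcases hv1 with h | h
        · obtain ⟨j, hvj, h2j⟩ := hedge v u h
          exact ⟨j, Or.inl h2j, hvj⟩
        · obtain ⟨j, hvj, h2j⟩ := hedge v b h
          exact ⟨j, Or.inr h2j, hvj⟩
      obtain ⟨j₂, hj₂Q, hvj₂⟩ : ∃ j₂, j₂ ∈ Q (w, d) ∧ v ∈ B j₂ := by
        rcases hv2 with h | h
        · obtain ⟨j, hvj, h2j⟩ := hedge v w h
          exact ⟨j, Or.inl h2j, hvj⟩
        · obtain ⟨j, hvj, h2j⟩ := hedge v d h
          exact ⟨j, Or.inr h2j, hvj⟩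
      have hx12 := hxgate j₁ hj₁Q j₂ hj₂Q
      exact hcoh j₁ j₂ (pth hT j₁ j₂) (pth_isPath hT j₁ j₂) x hx12 ⟨hvj₁, hvj₂⟩
    obtain ⟨c, hcx, hcub⟩ : ∃ c, c ∈ B x ∧ (c = u ∨ c = b) := by
      rcases hxQ with h | h
      · exact ⟨u, h, Or.inl rfl⟩
      · exact ⟨b, h, Or.inr rfl⟩
    have fin3 : ∀ i : Fin 3, i = 0 ∨ i = 1 ∨ i = 2 := by decide
    have fin2 : ∀ i : Fin 2, i = 0 ∨ i = 1 := by decide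
    refine ⟨![u, w], ![b, d],
      ![{v | (v ≠ u ∧ v ≠ b ∧ v ≠ w ∧ v ≠ d) ∧ (H.Adj v u ∨ H.Adj v b) ∧
          (H.Adj v w ∨ H.Adj v d)},
        {v | (v ≠ u ∧ v ≠ b ∧ v ≠ w ∧ v ≠ d) ∧ ¬H.Adj v u ∧ ¬H.Adj v b},
        {v | (v ≠ u ∧ v ≠ b ∧ v ≠ w ∧ v ≠ d) ∧ (H.Adj v u ∨ H.Adj v b) ∧
          ¬H.Adj v w ∧ ¬H.Adj v d}], ?_, ?_, ?_, ?_, ?_⟩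
    · intro i
      rcases fin2 i with rfl | rfl
      · exact hub
      · exact hwd
    · intro i j hij
      rw [Set.disjoint_left]
      intro v hv1 hv2
      rcases fin3 i with rfl | rfl | rfl <;> rcases fin3 j with rfl | rfl | rfl
      · exact hij rfl
      · have g1 : (H.Adj v u ∨ H.Adj v b) := hv1.2.1
        have g2 : ¬H.Adj v u ∧ ¬H.Adj v b := hv2.2
        tauto
      · have g1 : (H.Adj v w ∨ H.Adj v d) := hv1.2.2
        have g2 : ¬H.Adj v w ∧ ¬H.Adj v d := hv2.2.2
        tauto
      · have g1 : (H.Adj v u ∨ H.Adj v b) := hv2.2.1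
        have g2 : ¬H.Adj v u ∧ ¬H.Adj v b := hv1.2
        tauto
      · exact hij rfl
      · have g1 : (H.Adj v u ∨ H.Adj v b) := hv2.2.1
        have g2 : ¬H.Adj v u ∧ ¬H.Adj v b := hv1.2
        tauto
      · have g1 : (H.Adj v w ∨ H.Adj v d) := hv2.2.2
        have g2 : ¬H.Adj v w ∧ ¬H.Adj v d := hv1.2.2
        tauto
      · have g1 : (H.Adj v u ∨ H.Adj v b) := hv1.2.1
        have g2 : ¬H.Adj v u ∧ ¬H.Adj v b := hv2.2
        tauto
      · exact hij rfl
    · ext v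
      constructor
      · intro hv
        rw [Set.mem_iUnion] at hv
        obtain ⟨i, hi⟩ := hv
        have hok : v ≠ u ∧ v ≠ b ∧ v ≠ w ∧ v ≠ d := by
          rcases fin3 i with rfl | rfl | rfl
          · exact hi.1
          · exact hi.1
          · exact hi.1
        intro i'
        rcases fin2 i' with rfl | rfl
        · exact ⟨hok.1, hok.2.1⟩
        · exact ⟨hok.2.2.1, hok.2.2.2⟩
      · intro hok'
        have h0 : v ≠ u ∧ v ≠ b := hok' 0
        have h1 : v ≠ w ∧ v ≠ d := hok' 1
        have hok : v ≠ u ∧ v ≠ b ∧ v ≠ w ∧ v ≠ d := ⟨h0.1, h0.2, h1.1, h1.2⟩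
        rw [Set.mem_iUnion]
        by_cases hub' : H.Adj v u ∨ H.Adj v b
        · by_cases hwd' : H.Adj v w ∨ H.Adj v d
          · exact ⟨0, hok, hub', hwd'⟩
          · exact ⟨2, hok, hub', not_or.mp hwd'⟩
        · exact ⟨1, hok, not_or.mp hub'⟩
    · show ({v | (v ≠ u ∧ v ≠ b ∧ v ≠ w ∧ v ≠ d) ∧ (H.Adj v u ∨ H.Adj v b) ∧
          (H.Adj v w ∨ H.Adj v d)} : Set V).ncard ≤ t
      have hsub : {v | (v ≠ u ∧ v ≠ b ∧ v ≠ w ∧ v ≠ d) ∧ (H.Adj v u ∨ H.Adj v b) ∧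
          (H.Adj v w ∨ H.Adj v d)} ⊆ B x \ {c} := by
        rintro v ⟨hok, h1, h2⟩
        refine ⟨hkey v h1 h2, ?_⟩
        simp only [Set.mem_singleton_iff]
        rcases hcub with rfl | rfl
        · exact hok.1
        · exact hok.2.1
      calc ({v | (v ≠ u ∧ v ≠ b ∧ v ≠ w ∧ v ≠ d) ∧ (H.Adj v u ∨ H.Adj v b) ∧
              (H.Adj v w ∨ H.Adj v d)} : Set V).ncard
          ≤ (B x \ {c}).ncard := Set.ncard_le_ncard hsub (Set.toFinite _)
        _ = (B x).ncard - 1 := Set.ncard_diff_singleton_of_mem hcx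
        _ ≤ t := by
            have := hcard x
            omega
    · intro i v hv
      rcases fin2 i with rfl | rfl
      · have hv' : (v ≠ u ∧ v ≠ b ∧ v ≠ w ∧ v ≠ d) ∧ ¬H.Adj v u ∧ ¬H.Adj v b := hv
        exact ⟨hv'.2.1, hv'.2.2⟩
      · have hv' : (v ≠ u ∧ v ≠ b ∧ v ≠ w ∧ v ≠ d) ∧ (H.Adj v u ∨ H.Adj v b) ∧
          ¬H.Adj v w ∧ ¬H.Adj v d := hv
        exact ⟨hv'.2.2.1, hv'.2.2.2⟩
end

section
/- Let c ≥ 1 and let G be a finite simple graph on n vertices whose complement is c-closed. Then the number of subsets S ⊆ V(G) such that either the induced subgraph G[S] has at least two connected components each containing an edge, or some connected component of G[S] contains two vertices at distance at least 6 in G[S], is at most n^4 · 2^{2(c−1)}. -/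
open SimpleGraph Set

/-- Vertices outside the closed neighborhoods of both `u` and `v`. -/
def sfree {V : Type*} (G : SimpleGraph V) (u v : V) : Set V :=
  (G.neighborSet u ∪ G.neighborSet v ∪ {u, v})ᶜ

lemma sfree_card {V : Type*} {G : SimpleGraph V} {c : ℕ}
    (hclosed : CClosed Gᶜ c) {u v : V} (h : G.Adj u v) :
    (sfree G u v).ncard ≤ c - 1 := by
  have hne : u ≠ v := h.ne
  have hna : ¬ Gᶜ.Adj u v := by simp [SimpleGraph.compl_adj, h]
  have := hclosed u v hne hna
  have hset : sfree G u v = Gᶜ.neighborSet u ∩ Gᶜ.neighborSet v := by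
    ext w
    simp only [sfree, Set.mem_compl_iff, Set.mem_union, SimpleGraph.mem_neighborSet,
      Set.mem_insert_iff, Set.mem_singleton_iff, Set.mem_inter_iff, SimpleGraph.compl_adj]
    push_neg
    constructor
    · rintro ⟨⟨h1, h2⟩, h3, h4⟩
      exact ⟨⟨Ne.symm h3, h1⟩, Ne.symm h4, h2⟩
    · rintro ⟨⟨h1, h2⟩, h3, h4⟩
      exact ⟨⟨h2, h4⟩, Ne.symm h1, Ne.symm h3⟩
  rw [hset]
  exact this

lemma walk_near {α : Type*} {H : SimpleGraph α} {a b s : α} (hab : H.Adj a b)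
    (hs : H.Adj a s ∨ H.Adj b s ∨ s = a ∨ s = b) :
    ∃ p : H.Walk a s, p.length ≤ 2 := by
  rcases hs with h | h | rfl | rfl
  · exact ⟨SimpleGraph.Walk.cons h SimpleGraph.Walk.nil, by simp⟩
  · exact ⟨SimpleGraph.Walk.cons hab (SimpleGraph.Walk.cons h SimpleGraph.Walk.nil), by simp⟩
  · exact ⟨SimpleGraph.Walk.nil, by simp⟩
  · exact ⟨SimpleGraph.Walk.cons hab SimpleGraph.Walk.nil, by simp⟩

/-- If `w ∈ S` is not in `sfree G u v` for an edge `uv` of `G[S]`, then there is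
a short walk from `u` to `w` inside `G[S]`. -/
lemma key2 {V : Type*} {G : SimpleGraph V} {S : Set V} {u v : ↥S} {w : V} (hw : w ∈ S)
    (huv : (G.induce S).Adj u v) (hnot : w ∉ sfree G ↑u ↑v) :
    ∃ p : (G.induce S).Walk u ⟨w, hw⟩, p.length ≤ 2 := by
  apply walk_near huv
  simp only [sfree, Set.mem_compl_iff, not_not, Set.mem_union, SimpleGraph.mem_neighborSet,
    Set.mem_insert_iff, Set.mem_singleton_iff] at hnot
  rcases hnot with (h | h) | h | h
  · left; exact h
  · right; left; exact h
  · right; right; left; exact Subtype.ext h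
  · right; right; right; exact Subtype.ext h

lemma cover {V : Type*} {G : SimpleGraph V} {S : Set V}
    (hbad : (∃ a b x y : S, (G.induce S).Adj a b ∧ (G.induce S).Adj x y ∧
        ¬ (G.induce S).Reachable a x) ∨
      (∃ u v : S, (G.induce S).Reachable u v ∧ 6 ≤ (G.induce S).dist u v)) :
    ∃ a b x y : V, G.Adj a b ∧ G.Adj x y ∧ S ⊆ sfree G a b ∪ sfree G x y := by
  rcases hbad with ⟨a, b, x, y, hab, hxy, hnr⟩ | ⟨u, v, hr, hd⟩
  · refine ⟨↑a, ↑b, ↑x, ↑y, hab, hxy, fun s hs => ?_⟩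
    by_contra hcon
    rw [Set.mem_union] at hcon
    push_neg at hcon
    obtain ⟨p1, _⟩ := key2 hs hab hcon.1
    obtain ⟨p2, _⟩ := key2 hs hxy hcon.2
    exact hnr (p1.reachable.trans p2.reachable.symm)
  · obtain ⟨p, hp⟩ := hr.exists_walk_length_eq_dist
    have hL : 6 ≤ p.length := by omega
    have h1 : (G.induce S).Adj u (p.getVert 1) := by
      have := p.adj_getVert_succ (i := 0) (by omega)
      rwa [p.getVert_zero] at this
    have h2 : (G.induce S).Adj (p.getVert (p.length - 1)) v := by
      have := p.adj_getVert_succ (i := p.length - 1) (by omega)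
      rwa [show p.length - 1 + 1 = p.length by omega, p.getVert_length] at this
    refine ⟨↑u, ↑(p.getVert 1), ↑v, ↑(p.getVert (p.length - 1)), h1, h2.symm,
      fun s hs => ?_⟩
    by_contra hcon
    rw [Set.mem_union] at hcon
    push_neg at hcon
    obtain ⟨q1, hq1⟩ := key2 hs h1 hcon.1
    obtain ⟨q2, hq2⟩ := key2 hs h2.symm hcon.2
    have hdle : (G.induce S).dist u v ≤ (q1.append q2.reverse).length :=
      SimpleGraph.dist_le _
    rw [SimpleGraph.Walk.length_append, SimpleGraph.Walk.length_reverse] at hdle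
    omega

lemma ncard_biUnion_le {ι α : Type*} [Finite α] (s : Finset ι) (f : ι → Set α) :
    (⋃ i ∈ s, f i).ncard ≤ ∑ i ∈ s, (f i).ncard := by
  classical
  induction s using Finset.induction_on with
  | empty => simp
  | insert a t hx ih =>
    rw [Finset.set_biUnion_insert, Finset.sum_insert hx]
    calc (f a ∪ ⋃ i ∈ t, f i).ncard ≤ (f a).ncard + (⋃ i ∈ t, f i).ncard :=
          Set.ncard_union_le _ _
      _ ≤ (f a).ncard + ∑ i ∈ t, (f i).ncard := by omega

lemma ncard_subsets_le {α : Type*} [Finite α] (T : Set α) :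
    {S : Set α | S ⊆ T}.ncard ≤ 2 ^ T.ncard := by
  classical
  letI := Fintype.ofFinite α
  have hinj : Function.Injective (fun S : Set α => S.toFinset) := by
    intro A B h
    simpa [Set.toFinset_inj] using h
  have h1 : {S : Set α | S ⊆ T}.ncard
      = ((fun S : Set α => S.toFinset) '' {S | S ⊆ T}).ncard :=
    (Set.ncard_image_of_injective _ hinj).symm
  rw [h1]
  have h2 : ((fun S : Set α => S.toFinset) '' {S | S ⊆ T})
      ⊆ ↑(T.toFinset.powerset) := by
    rintro F ⟨A, hA, rfl⟩
    simp only [Finset.coe_powerset, Set.mem_preimage, Set.mem_powerset_iff,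
      Finset.coe_subset]
    exact Set.toFinset_subset_toFinset.mpr hA
  calc ((fun S : Set α => S.toFinset) '' {S | S ⊆ T}).ncard
      ≤ (↑(T.toFinset.powerset) : Set (Finset α)).ncard :=
        Set.ncard_le_ncard h2 (Set.toFinite _)
    _ = T.toFinset.powerset.card := Set.ncard_coe_finset _
    _ = 2 ^ T.toFinset.card := Finset.card_powerset _
    _ = 2 ^ T.ncard := by rw [Set.ncard_eq_toFinset_card']

/-- In the complement `G` of a `c`-closed graph on `n` vertices, the number of
sets `S` such that `G[S]` has at least two connected components each containing
an edge, or some connected component of `G[S]` contains two vertices at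
distance at least `6`, is at most `n^4 · 2^(2(c-1))`. -/
theorem stmt_9 {V : Type*} [Fintype V] (G : SimpleGraph V) (c n : ℕ)
    (hc : 1 ≤ c) (hn : Fintype.card V = n)
    (hclosed : CClosed Gᶜ c) :
    {S : Set V |
      (∃ a b x y : S, (G.induce S).Adj a b ∧ (G.induce S).Adj x y ∧
        ¬ (G.induce S).Reachable a x) ∨
      (∃ u v : S, (G.induce S).Reachable u v ∧ 6 ≤ (G.induce S).dist u v)}.ncard
      ≤ n ^ 4 * 2 ^ (2 * (c - 1)) := by
  classical
  set F : V × V × V × V → Set (Set V) := fun q =>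
    {S : Set V | G.Adj q.1 q.2.1 ∧ G.Adj q.2.2.1 q.2.2.2 ∧
      S ⊆ sfree G q.1 q.2.1 ∪ sfree G q.2.2.1 q.2.2.2} with hF
  have hcover : {S : Set V |
      (∃ a b x y : S, (G.induce S).Adj a b ∧ (G.induce S).Adj x y ∧
        ¬ (G.induce S).Reachable a x) ∨
      (∃ u v : S, (G.induce S).Reachable u v ∧ 6 ≤ (G.induce S).dist u v)}
      ⊆ ⋃ q ∈ (Finset.univ : Finset (V × V × V × V)), F q := by
    intro S hS
    obtain ⟨a, b, x, y, hab, hxy, hsub⟩ := cover hS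
    exact Set.mem_biUnion (Finset.mem_univ (a, b, x, y)) ⟨hab, hxy, hsub⟩
  have hFcard : ∀ q : V × V × V × V, (F q).ncard ≤ 2 ^ (2 * (c - 1)) := by
    intro q
    by_cases hq : G.Adj q.1 q.2.1 ∧ G.Adj q.2.2.1 q.2.2.2
    · have hsub : F q ⊆ {S : Set V |
          S ⊆ sfree G q.1 q.2.1 ∪ sfree G q.2.2.1 q.2.2.2} :=
        fun S hS => hS.2.2
      have hT : (sfree G q.1 q.2.1 ∪ sfree G q.2.2.1 q.2.2.2).ncard ≤ 2 * (c - 1) := by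
        calc (sfree G q.1 q.2.1 ∪ sfree G q.2.2.1 q.2.2.2).ncard
            ≤ (sfree G q.1 q.2.1).ncard + (sfree G q.2.2.1 q.2.2.2).ncard :=
              Set.ncard_union_le _ _
          _ ≤ (c - 1) + (c - 1) := add_le_add (sfree_card hclosed hq.1)
              (sfree_card hclosed hq.2)
          _ = 2 * (c - 1) := by ring
      calc (F q).ncard ≤ {S : Set V |
            S ⊆ sfree G q.1 q.2.1 ∪ sfree G q.2.2.1 q.2.2.2}.ncard :=
            Set.ncard_le_ncard hsub (Set.toFinite _)
        _ ≤ 2 ^ (sfree G q.1 q.2.1 ∪ sfree G q.2.2.1 q.2.2.2).ncard :=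
            ncard_subsets_le _
        _ ≤ 2 ^ (2 * (c - 1)) := Nat.pow_le_pow_right (by norm_num) hT
    · have : F q = ∅ := by
        ext S
        simp only [hF, Set.mem_setOf_eq, Set.mem_empty_iff_false, iff_false]
        intro h
        exact hq ⟨h.1, h.2.1⟩
      simp [this]
  calc {S : Set V |
      (∃ a b x y : S, (G.induce S).Adj a b ∧ (G.induce S).Adj x y ∧
        ¬ (G.induce S).Reachable a x) ∨
      (∃ u v : S, (G.induce S).Reachable u v ∧ 6 ≤ (G.induce S).dist u v)}.ncard
      ≤ (⋃ q ∈ (Finset.univ : Finset (V × V × V × V)), F q).ncard :=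
        Set.ncard_le_ncard hcover (Set.toFinite _)
    _ ≤ ∑ q ∈ (Finset.univ : Finset (V × V × V × V)), (F q).ncard :=
        ncard_biUnion_le _ _
    _ ≤ ∑ _q ∈ (Finset.univ : Finset (V × V × V × V)), 2 ^ (2 * (c - 1)) :=
        Finset.sum_le_sum fun q _ => hFcard q
    _ = Fintype.card (V × V × V × V) * 2 ^ (2 * (c - 1)) := by
        rw [Finset.sum_const, Finset.card_univ, smul_eq_mul]
    _ = n ^ 4 * 2 ^ (2 * (c - 1)) := by
        simp only [Fintype.card_prod, hn]
        ring
end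

section
/- Let c ≥ 1, d ≥ 1, k ≥ 1, ℓ ≥ 0, and let G be a finite simple graph on n vertices whose complement is c-closed. Suppose D ∈ ℕ is such that in every finite simple graph on at most ℓ + k(c+1) vertices, the number of vertex sets that are maximal subject to inducing a d-degenerate subgraph is at most D. Then the number of sets S ⊆ V(G) that are maximal subject to the induced subgraph G[S] being d-degenerate and such that G[S] admits a good (ℓ,k)-partition is at most n^{ℓ+2k} · D. -/
/-- The induced subgraph `G[S]` is `d`-degenerate: every nonempty subset of `S`
contains a vertex with at most `d` neighbors inside that subset. -/
def DegenerateOn {V : Type*} (G : SimpleGraph V) (S : Set V) (d : ℕ) : Prop :=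
  ∀ T ⊆ S, T.Nonempty → ∃ v ∈ T, ({u ∈ T | G.Adj v u}).ncard ≤ d

open Set

/-- Enumerate a finite set of size ≤ m by a function from `Fin m`. -/
lemma exists_range_cover {α : Type*} [Nonempty α] (s : Set α) (hs : s.Finite) (m : ℕ)
    (h : s.ncard ≤ m) : ∃ g : Fin m → α, s ⊆ Set.range g := by
  classical
  haveI := hs.fintype
  have hcard : Fintype.card s ≤ m := by
    rwa [← Nat.card_coe_set_eq, Nat.card_eq_fintype_card] at h
  let e : s ≃ Fin (Fintype.card s) := Fintype.equivFin s
  refine ⟨fun i => if hi : (i : ℕ) < Fintype.card s then (e.symm ⟨i, hi⟩ : α)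
    else Classical.arbitrary α, ?_⟩
  intro x hx
  refine ⟨⟨(e ⟨x, hx⟩ : Fin _), lt_of_lt_of_le (e ⟨x, hx⟩).isLt hcard⟩, ?_⟩
  simp only [dif_pos (e ⟨x, hx⟩).isLt, Fin.eta, Equiv.symm_apply_apply]

lemma image_adj_sep {V W : Type*} (ψ : W → V)
    (G : SimpleGraph V) (T : Set W) (v : W) :
    ψ '' {u ∈ T | (G.comap ψ).Adj v u} = {u ∈ ψ '' T | G.Adj (ψ v) u} := by
  ext x
  constructor
  · rintro ⟨u, ⟨hu, hadj⟩, rfl⟩; exact ⟨⟨u, hu, rfl⟩, hadj⟩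
  · rintro ⟨⟨u, hu, rfl⟩, hadj⟩; exact ⟨u, ⟨hu, hadj⟩, rfl⟩


lemma degenerateOn_comap_iff {V W : Type*} {ψ : W → V} (hψ : Function.Injective ψ)
    (G : SimpleGraph V) (T : Set W) (d : ℕ) :
    DegenerateOn (G.comap ψ) T d ↔ DegenerateOn G (ψ '' T) d := by
  constructor
  · intro h T₂ hT₂ hne
    have hsub : ψ ⁻¹' T₂ ⊆ T := by
      intro u hu
      obtain ⟨u', hu', heq⟩ := hT₂ hu
      rwa [← hψ heq]
    obtain ⟨x, hx⟩ := hne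
    obtain ⟨u0, hu0, rfl⟩ := hT₂ hx
    obtain ⟨v, hv, hcard⟩ := h (ψ ⁻¹' T₂) hsub ⟨u0, hx⟩
    refine ⟨ψ v, hv, ?_⟩
    have himg : T₂ = ψ '' (ψ ⁻¹' T₂) :=
      (Set.image_preimage_eq_of_subset (hT₂.trans (Set.image_subset_range ψ T))).symm
    calc ({u ∈ T₂ | G.Adj (ψ v) u}).ncard
        = (ψ '' {u ∈ ψ ⁻¹' T₂ | (G.comap ψ).Adj v u}).ncard := by
          rw [image_adj_sep, ← himg]
      _ = ({u ∈ ψ ⁻¹' T₂ | (G.comap ψ).Adj v u}).ncard := Set.ncard_image_of_injective _ hψ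
      _ ≤ d := hcard
  · intro h T' hT' hne
    obtain ⟨v, hv, hcard⟩ := h (ψ '' T') (Set.image_mono hT') (hne.image ψ)
    obtain ⟨w, hw, rfl⟩ := hv
    refine ⟨w, hw, ?_⟩
    calc ({u ∈ T' | (G.comap ψ).Adj w u}).ncard
        = (ψ '' {u ∈ T' | (G.comap ψ).Adj w u}).ncard :=
          (Set.ncard_image_of_injective _ hψ).symm
      _ = ({u ∈ ψ '' T' | G.Adj (ψ w) u}).ncard := by rw [image_adj_sep]
      _ ≤ d := hcard


def CSet {V : Type*} (G : SimpleGraph V) (a b : V) : Set V :=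
  {v | v ≠ a ∧ v ≠ b ∧ ¬ G.Adj v a ∧ ¬ G.Adj v b}

def WSet {V : Type*} (G : SimpleGraph V) {k ℓ : ℕ}
    (w : (Fin ℓ → V) × (Fin k → V) × (Fin k → V)) : Set V :=
  Set.range w.1 ∪
    ⋃ i : Fin k, insert (w.2.1 i) (insert (w.2.2 i) (CSet G (w.2.1 i) (w.2.2 i)))

lemma cset_ncard_le {V : Type*} [Fintype V] (G : SimpleGraph V) {c : ℕ}
    (hclosed : CClosed Gᶜ c) {a b : V} (hab : G.Adj a b) :
    (CSet G a b).ncard ≤ c - 1 := by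
  have h := hclosed a b hab.ne (by simp [SimpleGraph.compl_adj, hab])
  refine le_trans (Set.ncard_le_ncard ?_ (Set.toFinite _)) h
  rintro v ⟨h1, h2, h3, h4⟩
  exact ⟨⟨h1.symm, fun h => h3 h.symm⟩, ⟨h2.symm, fun h => h4 h.symm⟩⟩

lemma ncard_iUnion_le' {α : Type*} [Fintype α] {k : ℕ} (f : Fin k → Set α) :
    (⋃ i, f i).ncard ≤ ∑ i, (f i).ncard := by
  classical
  rw [Set.ncard_eq_toFinset_card', Set.toFinset_iUnion]
  refine le_trans Finset.card_biUnion_le (Finset.sum_le_sum ?_)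
  intro i _
  rw [Set.ncard_eq_toFinset_card']

lemma wset_ncard_le {V : Type*} [Fintype V] (G : SimpleGraph V) {c k ℓ : ℕ} (hc : 1 ≤ c)
    (hclosed : CClosed Gᶜ c) (w : (Fin ℓ → V) × (Fin k → V) × (Fin k → V))
    (hadj : ∀ i, G.Adj (w.2.1 i) (w.2.2 i)) :
    (WSet G w).ncard ≤ ℓ + k * (c + 1) := by
  classical
  refine le_trans (Set.ncard_union_le _ _) (Nat.add_le_add ?_ ?_)
  · have h : (Set.range w.1).ncard ≤ (Set.univ : Set (Fin ℓ)).ncard := by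
      rw [← Set.image_univ]; exact Set.ncard_image_le (Set.toFinite _)
    simpa [Set.ncard_univ] using h
  · refine le_trans (ncard_iUnion_le' _) ?_
    have h2 : ∀ i : Fin k,
        (insert (w.2.1 i) (insert (w.2.2 i) (CSet G (w.2.1 i) (w.2.2 i)))).ncard ≤ c + 1 := by
      intro i
      have ha := Set.ncard_insert_le (w.2.1 i) (insert (w.2.2 i) (CSet G (w.2.1 i) (w.2.2 i)))
      have hb := Set.ncard_insert_le (w.2.2 i) (CSet G (w.2.1 i) (w.2.2 i))
      have hcc := cset_ncard_le G hclosed (hadj i)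
      omega
    calc ∑ i : Fin k, (insert (w.2.1 i) (insert (w.2.2 i) (CSet G (w.2.1 i) (w.2.2 i)))).ncard
        ≤ ∑ _i : Fin k, (c + 1) := Finset.sum_le_sum fun i _ => h2 i
      _ = k * (c + 1) := by simp [Finset.sum_const, mul_comm]


lemma exists_code {V : Type*} [Fintype V] [Nonempty V] (G : SimpleGraph V) {k ℓ : ℕ}
    (S : Set V) (hgp : HasGoodPartition (G.induce S) ℓ k) :
    ∃ w : (Fin ℓ → V) × (Fin k → V) × (Fin k → V),
      (∀ i, G.Adj (w.2.1 i) (w.2.2 i)) ∧ S ⊆ WSet G w := by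
  obtain ⟨a, b, A, hadj, hdisj, hcover, hA0, hAi⟩ := hgp
  have hA0' : ((fun x : S => (x : V)) '' A 0).ncard ≤ ℓ := by
    rw [Set.ncard_image_of_injective _ Subtype.val_injective]; exact hA0
  obtain ⟨g, hg⟩ := exists_range_cover _ (Set.toFinite _) ℓ hA0'
  refine ⟨(g, fun i => (a i : V), fun i => (b i : V)), fun i => hadj i, ?_⟩
  intro v hv
  by_cases hcase : ∀ i, (⟨v, hv⟩ : S) ≠ a i ∧ (⟨v, hv⟩ : S) ≠ b i
  · have hmem : (⟨v, hv⟩ : S) ∈ ⋃ i, A i := by rw [hcover]; exact hcase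
    obtain ⟨j, hj⟩ := Set.mem_iUnion.mp hmem
    rcases Fin.eq_zero_or_eq_succ j with rfl | ⟨i, rfl⟩
    · left
      exact hg ⟨⟨v, hv⟩, hj, rfl⟩
    · right
      refine Set.mem_iUnion.mpr ⟨i, ?_⟩
      right; right
      obtain ⟨hna, hnb⟩ := hAi i _ hj
      refine ⟨fun h => (hcase i).1 (Subtype.ext h),
        fun h => (hcase i).2 (Subtype.ext h),
        fun h => hna h, fun h => hnb h⟩
  · push_neg at hcase
    obtain ⟨i, hi⟩ := hcase
    right
    refine Set.mem_iUnion.mpr ⟨i, ?_⟩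
    by_cases h1 : (⟨v, hv⟩ : S) = a i
    · left; exact congrArg Subtype.val h1
    · right; left; exact congrArg Subtype.val (hi h1)

lemma fiber_bound {V : Type*} [Fintype V] (G : SimpleGraph V) {c d k ℓ D : ℕ}
    (hD : ∀ (j : ℕ) (H : SimpleGraph (Fin j)), j ≤ ℓ + k * (c + 1) →
      {S : Set (Fin j) | DegenerateOn H S d ∧
        ∀ T : Set (Fin j), S ⊂ T → ¬ DegenerateOn H T d}.ncard ≤ D)
    (hc : 1 ≤ c) (hclosed : CClosed Gᶜ c)
    (w : (Fin ℓ → V) × (Fin k → V) × (Fin k → V))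
    (hadj : ∀ i, G.Adj (w.2.1 i) (w.2.2 i))
    (𝒯 : Set (Set V))
    (h𝒯 : ∀ S ∈ 𝒯, (DegenerateOn G S d ∧ ∀ T, S ⊂ T → ¬ DegenerateOn G T d)
        ∧ S ⊆ WSet G w) :
    𝒯.ncard ≤ D := by
  classical
  set W := WSet G w with hW
  have hWcard : W.ncard ≤ ℓ + k * (c + 1) := wset_ncard_le G hc hclosed w hadj
  set j := W.ncard with hj
  have hWfin : W.Finite := Set.toFinite _
  haveI : Fintype W := hWfin.fintype
  have hcardW : Fintype.card W = j := by
    rw [hj, ← Nat.card_coe_set_eq, Nat.card_eq_fintype_card]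
  let e : W ≃ Fin j := (Fintype.equivFin W).trans (finCongr hcardW)
  let ψ : Fin j → V := fun i => (e.symm i : V)
  have hψinj : Function.Injective ψ := fun i i' h => e.symm.injective (Subtype.ext h)
  have hrange : Set.range ψ = W := by
    ext x; constructor
    · rintro ⟨i, rfl⟩; exact (e.symm i).2
    · intro hx; exact ⟨e ⟨x, hx⟩, by simp [ψ]⟩
  refine le_trans
    (Set.ncard_le_ncard_of_injOn (fun S => ψ ⁻¹' S) ?_ ?_ (Set.toFinite _))
    (hD j (G.comap ψ) (le_of_eq_of_le hj.symm hWcard))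
  · intro S hS
    obtain ⟨⟨hdeg, hmax⟩, hsub⟩ := h𝒯 S hS
    have hSr : S ⊆ Set.range ψ := hrange ▸ hsub
    have himg : ψ '' (ψ ⁻¹' S) = S := Set.image_preimage_eq_of_subset hSr
    constructor
    · rw [degenerateOn_comap_iff hψinj, himg]; exact hdeg
    · intro T hT hdegT
      refine hmax (ψ '' T) ?_ ((degenerateOn_comap_iff hψinj G T d).mp hdegT)
      rw [← himg]
      exact ((Set.injOn_of_injective hψinj).image_ssubset_image_iff
        (Set.subset_univ _) (Set.subset_univ _)).mpr hT
  · intro S hS S' hS' heq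
    have h1 : S ⊆ Set.range ψ := hrange ▸ (h𝒯 S hS).2
    have h2 : S' ⊆ Set.range ψ := hrange ▸ (h𝒯 S' hS').2
    rw [← Set.image_preimage_eq_of_subset h1, ← Set.image_preimage_eq_of_subset h2]
    exact congrArg (ψ '' ·) heq

/-- If in every graph on at most `ℓ + k(c+1)` vertices there are at most `D`
vertex sets maximal subject to inducing a `d`-degenerate subgraph, then in the
complement `G` of a `c`-closed graph on `n` vertices the number of sets `S`
maximal subject to `G[S]` being `d`-degenerate and such that `G[S]` admits a
good `(ℓ, k)`-partition is at most `n^(ℓ+2k) · D`. -/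
theorem stmt_10 {V : Type*} [Fintype V] (G : SimpleGraph V) (c d k ℓ n D : ℕ)
    (hc : 1 ≤ c) (hd : 1 ≤ d) (hk : 1 ≤ k)
    (hn : Fintype.card V = n)
    (hclosed : CClosed Gᶜ c)
    (hD : ∀ (j : ℕ) (H : SimpleGraph (Fin j)), j ≤ ℓ + k * (c + 1) →
      {S : Set (Fin j) | DegenerateOn H S d ∧
        ∀ T : Set (Fin j), S ⊂ T → ¬ DegenerateOn H T d}.ncard ≤ D) :
    {S : Set V | (DegenerateOn G S d ∧
        ∀ T : Set V, S ⊂ T → ¬ DegenerateOn G T d) ∧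
      HasGoodPartition (G.induce S) ℓ k}.ncard
      ≤ n ^ (ℓ + 2 * k) * D := by
  classical
  set 𝒮 := {S : Set V | (DegenerateOn G S d ∧
      ∀ T : Set V, S ⊂ T → ¬ DegenerateOn G T d) ∧
    HasGoodPartition (G.induce S) ℓ k} with h𝒮
  rcases Set.eq_empty_or_nonempty 𝒮 with he | hne
  · rw [he, Set.ncard_empty]; exact Nat.zero_le _
  obtain ⟨S₀, hS₀⟩ := hne
  haveI : Nonempty V := by
    obtain ⟨a, _, _, _, _⟩ := hS₀.2
    exact ⟨(a ⟨0, hk⟩ : V)⟩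
  have hex : ∀ S ∈ 𝒮, ∃ w : (Fin ℓ → V) × (Fin k → V) × (Fin k → V),
      (∀ i, G.Adj (w.2.1 i) (w.2.2 i)) ∧ S ⊆ WSet G w :=
    fun S hS => exists_code G S hS.2
  let f : Set V → (Fin ℓ → V) × (Fin k → V) × (Fin k → V) :=
    fun S => if h : S ∈ 𝒮 then (hex S h).choose else Classical.arbitrary _
  have hf : ∀ S (hS : S ∈ 𝒮),
      (∀ i, G.Adj ((f S).2.1 i) ((f S).2.2 i)) ∧ S ⊆ WSet G (f S) := by
    intro S hS
    simp only [f, dif_pos hS]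
    exact (hex S hS).choose_spec
  have hfin : 𝒮.Finite := Set.toFinite _
  set F : Finset (Set V) := hfin.toFinset with hF
  have hcard : 𝒮.ncard = F.card := Set.ncard_eq_toFinset_card 𝒮 hfin
  have key : F.card ≤ D * (F.image f).card := by
    apply Finset.card_le_mul_card_image
    intro wv hwv
    obtain ⟨S₁, hS₁, hfS₁⟩ := Finset.mem_image.mp hwv
    have hS₁' : S₁ ∈ 𝒮 := hfin.mem_toFinset.mp hS₁
    have hadj1 : ∀ i, G.Adj (wv.2.1 i) (wv.2.2 i) := hfS₁ ▸ (hf S₁ hS₁').1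
    have hcoe : (↑({S ∈ F | f S = wv} : Finset (Set V)) : Set (Set V))
        = {S | S ∈ 𝒮 ∧ f S = wv} := by
      ext S
      simp [hF, hfin.mem_toFinset]
      exact fun _ => Iff.rfl
    calc ({S ∈ F | f S = wv} : Finset (Set V)).card
        = {S | S ∈ 𝒮 ∧ f S = wv}.ncard := by
          rw [← hcoe, Set.ncard_coe_finset]
      _ ≤ D := by
          apply fiber_bound G hD hc hclosed wv hadj1
          rintro S ⟨hS, hfeq⟩
          exact ⟨hS.1, hfeq ▸ (hf S hS).2⟩
  have himg : (F.image f).card ≤ n ^ ℓ * (n ^ k * n ^ k) := by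
    refine le_trans (Finset.card_le_univ _) ?_
    simp [Fintype.card_fun, hn]
  calc 𝒮.ncard = F.card := hcard
    _ ≤ D * (F.image f).card := key
    _ ≤ D * (n ^ ℓ * (n ^ k * n ^ k)) := Nat.mul_le_mul_left D himg
    _ = n ^ (ℓ + 2 * k) * D := by
        rw [two_mul, pow_add, pow_add, mul_comm]
end

section
/- Let d ≥ 1 and let H be a d-degenerate finite simple graph. Then H is a 4d-star (equivalently, H has a vertex cover of size at most 4d) or H admits a good (4d, 2d)-partition. -/
/-- `H` is a `k`-star: its vertex set splits into a head `A` with `|A| ≤ k`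
and an independent set of tails; equivalently, `A` is a vertex cover of size at
most `k`. -/
def IsKStar {V : Type*} (H : SimpleGraph V) (k : ℕ) : Prop :=
  ∃ A : Set V, A.ncard ≤ k ∧ ∀ u ∉ A, ∀ v ∉ A, ¬ H.Adj u v

lemma matching_or_cover {V : Type*} [Fintype V] (H : SimpleGraph V) (m : ℕ) :
    (∃ a b : Fin m → V, (∀ i, H.Adj (a i) (b i)) ∧ (∀ i j, a i ≠ b j) ∧
      Function.Injective a ∧ Function.Injective b) ∨ IsKStar H (2 * m) := by
  induction m with
  | zero =>
    left
    exact ⟨fun i => i.elim0, fun i => i.elim0, fun i => i.elim0, fun i => i.elim0,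
      fun i j h => i.elim0, fun i j h => i.elim0⟩
  | succ m ih =>
    rcases ih with ⟨a, b, hab, hanb, hainj, hbinj⟩ | ⟨A, hA, hcov⟩
    · set S : Set V := Set.range a ∪ Set.range b with hS
      by_cases hE : ∀ u ∉ S, ∀ v ∉ S, ¬ H.Adj u v
      · right
        refine ⟨S, ?_, hE⟩
        calc S.ncard ≤ (Set.range a).ncard + (Set.range b).ncard := Set.ncard_union_le _ _
          _ ≤ m + m := by
              have h1 : (Set.range a).ncard ≤ m := by
                classical
                rw [← Set.image_univ, ← Finset.coe_univ, ← Finset.coe_image,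
                  Set.ncard_coe_finset]
                exact le_trans (Finset.card_image_le) (by simp)
              have h2 : (Set.range b).ncard ≤ m := by
                classical
                rw [← Set.image_univ, ← Finset.coe_univ, ← Finset.coe_image,
                  Set.ncard_coe_finset]
                exact le_trans (Finset.card_image_le) (by simp)
              omega
          _ ≤ 2 * (m + 1) := by omega
      · left
        push_neg at hE
        obtain ⟨x, hx, y, hy, hxy⟩ := hE
        have hxa : ∀ i, x ≠ a i := fun i h => hx (Or.inl ⟨i, h.symm⟩)
        have hxb : ∀ i, x ≠ b i := fun i h => hx (Or.inr ⟨i, h.symm⟩)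
        have hya : ∀ i, y ≠ a i := fun i h => hy (Or.inl ⟨i, h.symm⟩)
        have hyb : ∀ i, y ≠ b i := fun i h => hy (Or.inr ⟨i, h.symm⟩)
        refine ⟨Fin.snoc a x, Fin.snoc b y, ?_, ?_, ?_, ?_⟩
        · intro i
          induction i using Fin.lastCases with
          | last => simpa using hxy
          | cast i => simpa using hab i
        · intro i j
          induction i using Fin.lastCases with
          | last =>
            induction j using Fin.lastCases with
            | last => simpa using hxy.ne
            | cast j => simpa using (hxb j)
          | cast i =>
            induction j using Fin.lastCases with
            | last => simpa using fun h => (hya i) h.symm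
            | cast j => simpa using hanb i j
        · intro i j h
          induction i using Fin.lastCases with
          | last =>
            induction j using Fin.lastCases with
            | last => rfl
            | cast j => simp at h; exact absurd h.symm (hxa j).symm
          | cast i =>
            induction j using Fin.lastCases with
            | last => simp at h; exact absurd h (hxa i).symm
            | cast j => simp at h; exact congrArg Fin.castSucc (hainj h)
        · intro i j h
          induction i using Fin.lastCases with
          | last =>
            induction j using Fin.lastCases with
            | last => rfl
            | cast j => simp at h; exact absurd h.symm (hyb j).symm
          | cast i =>
            induction j using Fin.lastCases with
            | last => simp at h; exact absurd h (hyb i).symm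
            | cast j => simp at h; exact congrArg Fin.castSucc (hbinj h)
    · right
      exact ⟨A, by omega, hcov⟩

lemma pairs_card_le {V : Type*} [DecidableEq V] (H : SimpleGraph V) [DecidableRel H.Adj]
    (d : ℕ)
    (hdeg : ∀ S : Finset V, S.Nonempty → ∃ v ∈ S, (S.filter (H.Adj v)).card ≤ d) :
    ∀ (n : ℕ) (S : Finset V), S.card = n →
      ((S ×ˢ S).filter (fun p => H.Adj p.1 p.2)).card ≤ 2 * d * S.card := by
  intro n
  induction n with
  | zero =>
    intro S hS
    simp [Finset.card_eq_zero.mp hS]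
  | succ n ih =>
    intro S hS
    have hne : S.Nonempty := by rw [← Finset.card_pos, hS]; omega
    obtain ⟨v, hv, hvd⟩ := hdeg S hne
    set S' := S.erase v with hS'def
    have hcard' : S'.card = n := by rw [hS'def, Finset.card_erase_of_mem hv, hS]; omega
    have h1 := ih S' hcard'
    set P := (S ×ˢ S).filter (fun p => H.Adj p.1 p.2) with hP
    set P' := (S' ×ˢ S').filter (fun p => H.Adj p.1 p.2) with hP'
    set Q1 := P.filter (fun p => p.1 = v) with hQ1
    set Q2 := P.filter (fun p => p.2 = v) with hQ2
    have hsub : P ⊆ P' ∪ Q1 ∪ Q2 := by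
      intro p hp
      have hp' := hp
      simp only [hP, Finset.mem_filter, Finset.mem_product] at hp'
      by_cases h1v : p.1 = v
      · exact Finset.mem_union_left _ (Finset.mem_union_right _ (by simp [hQ1, hp, h1v]))
      by_cases h2v : p.2 = v
      · exact Finset.mem_union_right _ (by simp [hQ2, hp, h2v])
      · refine Finset.mem_union_left _ (Finset.mem_union_left _ ?_)
        simp only [hP', Finset.mem_filter, Finset.mem_product, hS'def, Finset.mem_erase]
        exact ⟨⟨⟨h1v, hp'.1.1⟩, ⟨h2v, hp'.1.2⟩⟩, hp'.2⟩
    have hq1 : Q1.card ≤ d := by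
      refine le_trans (Finset.card_le_card_of_injOn Prod.snd ?_ ?_) hvd
      · intro p hp
        simp only [hQ1, hP, Finset.mem_filter, Finset.mem_product, Finset.mem_coe] at hp
        simp only [Finset.mem_coe, Finset.mem_filter]
        exact ⟨hp.1.1.2, hp.2 ▸ hp.1.2⟩
      · intro p hp q hq h
        simp only [hQ1, hP, Finset.mem_filter, Finset.mem_product, Finset.mem_coe] at hp hq
        exact Prod.ext (hp.2.trans hq.2.symm) h
    have hq2 : Q2.card ≤ d := by
      refine le_trans (Finset.card_le_card_of_injOn Prod.fst ?_ ?_) hvd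
      · intro p hp
        simp only [hQ2, hP, Finset.mem_filter, Finset.mem_product, Finset.mem_coe] at hp
        simp only [Finset.mem_coe, Finset.mem_filter]
        exact ⟨hp.1.1.1, ((hp.2 ▸ hp.1.2 : H.Adj p.1 v)).symm⟩
      · intro p hp q hq h
        simp only [hQ2, hP, Finset.mem_filter, Finset.mem_product, Finset.mem_coe] at hp hq
        exact Prod.ext h (hp.2.trans hq.2.symm)
    calc P.card ≤ (P' ∪ Q1 ∪ Q2).card := Finset.card_le_card hsub
      _ ≤ P'.card + Q1.card + Q2.card := by
          refine le_trans (Finset.card_union_le _ _) ?_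
          have := Finset.card_union_le P' Q1
          omega
      _ ≤ 2 * d * n + d + d := by
          have : P'.card ≤ 2 * d * n := by rw [← hcard']; exact h1
          omega
      _ ≤ 2 * d * S.card := by rw [hS]; ring_nf; omega

lemma bad_card_le {V : Type*} [Fintype V] [DecidableEq V] (H : SimpleGraph V)
    [DecidableRel H.Adj] (d : ℕ) (hd : 1 ≤ d)
    (hdeg : ∀ S : Finset V, S.Nonempty → ∃ v ∈ S, (S.filter (H.Adj v)).card ≤ d)
    (a b : Fin (2 * d) → V)
    (hanb : ∀ i j, a i ≠ b j) (hainj : Function.Injective a)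
    (hbinj : Function.Injective b) :
    (Finset.univ.filter
      (fun v => (∀ i, v ≠ a i ∧ v ≠ b i) ∧ ∀ i, H.Adj v (a i) ∨ H.Adj v (b i))
        : Finset V).card ≤ 4 * d := by
  set Estar : Finset V := Finset.univ.image a ∪ Finset.univ.image b with hEstar
  set B : Finset V := Finset.univ.filter
      (fun v => (∀ i, v ≠ a i ∧ v ≠ b i) ∧ ∀ i, H.Adj v (a i) ∨ H.Adj v (b i)) with hBdef
  have hmemB : ∀ v ∈ B, (∀ i, v ≠ a i ∧ v ≠ b i) ∧ ∀ i, H.Adj v (a i) ∨ H.Adj v (b i) := by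
    intro v hv; simpa [hBdef] using hv
  have hmemE : ∀ w, w ∈ Estar ↔ (∃ i, a i = w) ∨ ∃ i, b i = w := by
    intro w; simp [hEstar]
  have hEcard : Estar.card ≤ 4 * d := by
    calc Estar.card ≤ (Finset.univ.image a).card + (Finset.univ.image b).card :=
          Finset.card_union_le _ _
      _ ≤ 2 * d + 2 * d := by
          have h1 := Finset.card_image_le (s := (Finset.univ : Finset (Fin (2 * d)))) (f := a)
          have h2 := Finset.card_image_le (s := (Finset.univ : Finset (Fin (2 * d)))) (f := b)
          simp at h1 h2
          omega
      _ = 4 * d := by ring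
  have hdisjBE : ∀ v ∈ B, v ∉ Estar := by
    intro v hv hvE
    rcases (hmemE v).mp hvE with ⟨i, hi⟩ | ⟨i, hi⟩
    · exact ((hmemB v hv).1 i).1 hi.symm
    · exact ((hmemB v hv).1 i).2 hi.symm
  -- each bad vertex has ≥ 2d neighbors in Estar
  have hv2d : ∀ v ∈ B, 2 * d ≤ (Estar.filter (H.Adj v)).card := by
    intro v hv
    have key : (Finset.univ : Finset (Fin (2 * d))).card ≤ (Estar.filter (H.Adj v)).card := by
      refine Finset.card_le_card_of_injOn
        (fun i => if H.Adj v (a i) then a i else b i) ?_ ?_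
      · intro i _
        by_cases h : H.Adj v (a i)
        · simp only; rw [if_pos h, Finset.mem_coe, Finset.mem_filter]
          exact ⟨(hmemE _).mpr (Or.inl ⟨i, rfl⟩), h⟩
        · simp only; rw [if_neg h, Finset.mem_coe, Finset.mem_filter]
          refine ⟨(hmemE _).mpr (Or.inr ⟨i, rfl⟩), ?_⟩
          rcases (hmemB v hv).2 i with h' | h'
          · exact absurd h' h
          · exact h'
      · intro i _ j _ hij
        by_cases h1 : H.Adj v (a i) <;> by_cases h2 : H.Adj v (a j) <;>
          simp only [h1, h2, if_pos, if_neg, if_false] at hij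
        · exact hainj hij
        · exact absurd hij (hanb i j)
        · exact absurd hij.symm (hanb j i)
        · exact hbinj hij
    simpa using key
  set T : Finset V := B ∪ Estar with hT
  have hP := pairs_card_le H d hdeg T.card T rfl
  set P := (T ×ˢ T).filter (fun p => H.Adj p.1 p.2) with hPdef
  set P1 := B.biUnion (fun v => (Estar.filter (H.Adj v)).image (fun w => (v, w))) with hP1
  set P2 := P1.image Prod.swap with hP2
  have hP1card : 2 * d * B.card ≤ P1.card := by
    rw [hP1, Finset.card_biUnion]
    · calc 2 * d * B.card = ∑ _v ∈ B, 2 * d := by rw [Finset.sum_const]; ring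
        _ ≤ ∑ v ∈ B, ((Estar.filter (H.Adj v)).image (fun w => (v, w))).card := by
            refine Finset.sum_le_sum ?_
            intro v hv
            rw [Finset.card_image_of_injective _ (by intro x y h; simpa using h)]
            exact hv2d v hv
    · intro x _ y _ hxy
      simp only [Finset.disjoint_left]
      intro p hp hp2
      simp only [Finset.mem_image] at hp hp2
      obtain ⟨w1, _, rfl⟩ := hp
      obtain ⟨w2, _, h2⟩ := hp2
      exact hxy ((Prod.ext_iff.mp h2).1.symm)
  have hmemP1 : ∀ p ∈ P1, p.1 ∈ B ∧ p.2 ∈ Estar ∧ H.Adj p.1 p.2 := by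
    intro p hp
    simp only [hP1, Finset.mem_biUnion, Finset.mem_image, Finset.mem_filter] at hp
    obtain ⟨v, hv, w, ⟨hw, hadj⟩, rfl⟩ := hp
    exact ⟨hv, hw, hadj⟩
  have hP2card : P2.card = P1.card :=
    Finset.card_image_of_injective _ Prod.swap_injective
  have hsub : P1 ∪ P2 ⊆ P := by
    intro p hp
    rcases Finset.mem_union.mp hp with hp | hp
    · obtain ⟨h1, h2, h3⟩ := hmemP1 p hp
      simp only [hPdef, Finset.mem_filter, Finset.mem_product, hT]
      exact ⟨⟨Finset.mem_union_left _ h1, Finset.mem_union_right _ h2⟩, h3⟩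
    · simp only [hP2, Finset.mem_image] at hp
      obtain ⟨q, hq, rfl⟩ := hp
      obtain ⟨h1, h2, h3⟩ := hmemP1 q hq
      simp only [hPdef, Finset.mem_filter, Finset.mem_product, hT, Prod.fst_swap, Prod.snd_swap]
      exact ⟨⟨Finset.mem_union_right _ h2, Finset.mem_union_left _ h1⟩, h3.symm⟩
  have hdisjP : Disjoint P1 P2 := by
    rw [Finset.disjoint_left]
    intro p hp hp2
    have h1 := (hmemP1 p hp).1
    simp only [hP2, Finset.mem_image] at hp2
    obtain ⟨q, hq, hqs⟩ := hp2
    have h2 := (hmemP1 q hq).2.1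
    have : p.1 ∈ Estar := by rw [← hqs]; exact h2
    exact hdisjBE p.1 h1 this
  have hcards : P1.card + P2.card ≤ P.card := by
    rw [← Finset.card_union_of_disjoint hdisjP]
    exact Finset.card_le_card hsub
  have hTcard : T.card ≤ B.card + 4 * d := by
    calc T.card ≤ B.card + Estar.card := Finset.card_union_le _ _
      _ ≤ B.card + 4 * d := by omega
  have key : 2 * (2 * d * B.card) ≤ 2 * d * (B.card + 4 * d) := by
    calc 2 * (2 * d * B.card) ≤ P1.card + P2.card := by omega
      _ ≤ P.card := hcards
      _ ≤ 2 * d * T.card := hP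
      _ ≤ 2 * d * (B.card + 4 * d) := Nat.mul_le_mul_left _ hTcard
  have : 2 * d * B.card ≤ 2 * d * (4 * d) := by nlinarith
  exact Nat.le_of_mul_le_mul_left this (by omega)


/-- Every `d`-degenerate finite graph is a `4d`-star or admits a good
`(4d, 2d)`-partition. -/
theorem stmt_11 {V : Type*} [Fintype V] (H : SimpleGraph V) (d : ℕ)
    (hd : 1 ≤ d)
    (hdeg : ∀ S : Set V, S.Nonempty → ∃ v ∈ S, ({u ∈ S | H.Adj v u}).ncard ≤ d) :
    IsKStar H (4 * d) ∨ HasGoodPartition H (4 * d) (2 * d) := by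
  classical
  have hdegF : ∀ S : Finset V, S.Nonempty → ∃ v ∈ S, (S.filter (H.Adj v)).card ≤ d := by
    intro S hS
    obtain ⟨v, hv, hvc⟩ := hdeg (↑S) (by exact_mod_cast hS)
    refine ⟨v, by exact_mod_cast hv, ?_⟩
    have heq : {u ∈ (↑S : Set V) | H.Adj v u} = ↑(S.filter (H.Adj v)) := by
      ext u; simp
    rwa [heq, Set.ncard_coe_finset] at hvc
  rcases matching_or_cover H (2 * d) with ⟨a, b, hab, hanb, hainj, hbinj⟩ | ⟨A, hA, hcov⟩
  · right
    set A0 : Set V :=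
      {v | (∀ i, v ≠ a i ∧ v ≠ b i) ∧ ∀ i, H.Adj v (a i) ∨ H.Adj v (b i)} with hA0
    set As : Fin (2 * d) → Set V := fun i =>
      {v | (∀ j, v ≠ a j ∧ v ≠ b j) ∧ (¬ H.Adj v (a i) ∧ ¬ H.Adj v (b i)) ∧
        ∀ j, j < i → (H.Adj v (a j) ∨ H.Adj v (b j))} with hAs
    refine ⟨a, b, Fin.cases A0 As, hab, ?_, ?_, ?_, ?_⟩
    · -- disjointness
      intro i j hij
      rw [Set.disjoint_left]
      intro v hvi hvj
      rcases Fin.eq_zero_or_eq_succ i with rfl | ⟨i', rfl⟩ <;>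
        rcases Fin.eq_zero_or_eq_succ j with rfl | ⟨j', rfl⟩
      · exact hij rfl
      · simp only [Fin.cases_zero] at hvi
        simp only [Fin.cases_succ] at hvj
        rcases hvi.2 j' with h | h
        · exact hvj.2.1.1 h
        · exact hvj.2.1.2 h
      · simp only [Fin.cases_zero] at hvj
        simp only [Fin.cases_succ] at hvi
        rcases hvj.2 i' with h | h
        · exact hvi.2.1.1 h
        · exact hvi.2.1.2 h
      · simp only [Fin.cases_succ] at hvi hvj
        have hne : i' ≠ j' := fun h => hij (by rw [h])
        rcases lt_trichotomy i' j' with h | h | h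
        · rcases hvj.2.2 i' h with h' | h'
          · exact hvi.2.1.1 h'
          · exact hvi.2.1.2 h'
        · exact hne h
        · rcases hvi.2.2 j' h with h' | h'
          · exact hvj.2.1.1 h'
          · exact hvj.2.1.2 h'
    · -- union
      ext v
      simp only [Set.mem_iUnion, Set.mem_setOf_eq]
      constructor
      · rintro ⟨i, hi⟩
        rcases Fin.eq_zero_or_eq_succ i with rfl | ⟨i', rfl⟩
        · simp only [Fin.cases_zero] at hi; exact hi.1
        · simp only [Fin.cases_succ] at hi; exact hi.1
      · intro hv
        by_cases hall : ∀ i, H.Adj v (a i) ∨ H.Adj v (b i)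
        · exact ⟨0, by simp only [Fin.cases_zero]; exact ⟨hv, hall⟩⟩
        · push_neg at hall
          obtain ⟨i, hi1, hi2⟩ := hall
          set T : Finset (Fin (2 * d)) :=
            Finset.univ.filter (fun j => ¬ H.Adj v (a j) ∧ ¬ H.Adj v (b j)) with hTdef
          have hTne : T.Nonempty := ⟨i, by simp [hTdef, hi1, hi2]⟩
          set i0 := T.min' hTne with hi0
          have hi0T : i0 ∈ T := T.min'_mem hTne
          have hi0T' : ¬ H.Adj v (a i0) ∧ ¬ H.Adj v (b i0) := by
            simpa [hTdef] using hi0T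
          refine ⟨i0.succ, ?_⟩
          simp only [Fin.cases_succ]
          refine ⟨hv, hi0T', ?_⟩
          intro j hj
          by_contra hcon
          push_neg at hcon
          have hjT : j ∈ T := by simp [hTdef, hcon.1, hcon.2]
          exact absurd (T.min'_le j hjT) (not_le.mpr hj)
    · -- cardinality of A 0
      simp only [Fin.cases_zero]
      have : A0 = ↑(Finset.univ.filter
          (fun v => (∀ i, v ≠ a i ∧ v ≠ b i) ∧ ∀ i, H.Adj v (a i) ∨ H.Adj v (b i))
            : Finset V) := by
        ext v; simp [hA0]
      rw [this, Set.ncard_coe_finset]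
      exact bad_card_le H d hd hdegF a b hanb hainj hbinj
    · -- the non-adjacency of A i.succ
      intro i v hv
      simp only [Fin.cases_succ] at hv
      exact hv.2.1
  · left
    exact ⟨A, by omega, hcov⟩
end

section
/- Let G be a finite simple graph and let u, v be adjacent vertices of G with N(u)∖{v} = N(v)∖{u} (true twins). Let G' be the graph obtained from G by deleting the edge uv. Then M₁(G) ≤ M₁(G'). -/
/-- `S` is a generalized induced matching in `G`: the induced subgraph `G[S]`
has maximum degree at most `1`. -/
def GIM {V : Type*} (G : SimpleGraph V) (S : Set V) : Prop :=
  ∀ v ∈ S, ({u ∈ S | G.Adj v u}).ncard ≤ 1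

/-- The number of maximal generalized induced matchings of `G`. -/
noncomputable def M1 {V : Type*} (G : SimpleGraph V) : ℕ :=
  {S : Set V | GIM G S ∧ ∀ T : Set V, S ⊂ T → ¬ GIM G T}.ncard

lemma gim_iff {V : Type*} [Fintype V] (G : SimpleGraph V) (u v : V)
    (huv : G.Adj u v)
    (htwin : G.neighborSet u \ {v} = G.neighborSet v \ {u}) (S : Set V) :
    GIM G S ↔ GIM (G.deleteEdges {s(u, v)}) S := by
  set G' := G.deleteEdges {s(u, v)} with hG'def
  have hne : u ≠ v := G.ne_of_adj huv
  have hadj : ∀ a b : V, G'.Adj a b ↔ G.Adj a b ∧ ¬(a = u ∧ b = v) ∧ ¬(a = v ∧ b = u) := by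
    intro a b
    rw [hG'def, SimpleGraph.deleteEdges_adj]
    simp only [Set.mem_singleton_iff, Sym2.eq_iff]
    tauto
  constructor
  · intro h w hw
    refine le_trans (Set.ncard_le_ncard ?_ (Set.toFinite _)) (h w hw)
    intro x hx
    exact ⟨hx.1, ((hadj w x).1 hx.2).1⟩
  · intro h w hw
    -- helper: if both u and v are in S and x ∈ S is a common G-neighbor
    -- distinct from u, v, contradiction via the GIM' condition at x.
    have hcommon : ∀ x ∈ S, u ∈ S → v ∈ S → G.Adj u x → x ≠ u → x ≠ v → False := by
      intro x hxS huS hvS hux hxu hxv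
      have hvx : G.Adj v x := by
        have : x ∈ G.neighborSet u \ {v} := ⟨hux, hxv⟩
        rw [htwin] at this
        exact this.1
      have h1 : G'.Adj x u := (hadj x u).2 ⟨hux.symm, by tauto, by tauto⟩
      have h2 : G'.Adj x v := (hadj x v).2 ⟨hvx.symm, by tauto, by tauto⟩
      have hsub : ({u, v} : Set V) ⊆ {y ∈ S | G'.Adj x y} := by
        rintro y (rfl | rfl)
        exacts [⟨huS, h1⟩, ⟨hvS, h2⟩]
      have h2le : 2 ≤ ({y ∈ S | G'.Adj x y}).ncard := by
        calc 2 = ({u, v} : Set V).ncard := (Set.ncard_pair hne).symm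
          _ ≤ _ := Set.ncard_le_ncard hsub (Set.toFinite _)
      have := h x hxS
      omega
    by_cases hwu : w = u
    · subst hwu
      by_cases hvS : v ∈ S
      · have hset : {x ∈ S | G.Adj w x} = {v} := by
          ext x
          simp only [Set.mem_setOf_eq, Set.mem_singleton_iff]
          constructor
          · rintro ⟨hxS, hxadj⟩
            by_contra hxv
            exact hcommon x hxS hw hvS hxadj (fun h => G.irrefl (v := w) (h ▸ hxadj)) hxv
          · rintro rfl
            exact ⟨hvS, huv⟩
        rw [hset, Set.ncard_singleton]
      · have hset : {x ∈ S | G.Adj w x} = {x ∈ S | G'.Adj w x} := by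
          ext x
          simp only [Set.mem_setOf_eq]
          constructor
          · rintro ⟨hxS, hx⟩
            refine ⟨hxS, (hadj w x).2 ⟨hx, ?_, ?_⟩⟩
            · rintro ⟨_, rfl⟩; exact hvS hxS
            · rintro ⟨rfl, _⟩; exact hne rfl
          · rintro ⟨hxS, hx⟩
            exact ⟨hxS, ((hadj w x).1 hx).1⟩
        rw [hset]; exact h w hw
    · by_cases hwv : w = v
      · subst hwv
        by_cases huS : u ∈ S
        · have hset : {x ∈ S | G.Adj w x} = {u} := by
            ext x
            simp only [Set.mem_setOf_eq, Set.mem_singleton_iff]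
            constructor
            · rintro ⟨hxS, hxadj⟩
              by_contra hxu
              have hux : G.Adj u x := by
                have : x ∈ G.neighborSet w \ {u} := ⟨hxadj, hxu⟩
                rw [← htwin] at this
                exact this.1
              exact hcommon x hxS huS hw hux hxu (fun h => G.irrefl (v := w) (h ▸ hxadj))
            · rintro rfl
              exact ⟨huS, huv.symm⟩
          rw [hset, Set.ncard_singleton]
        · have hset : {x ∈ S | G.Adj w x} = {x ∈ S | G'.Adj w x} := by
            ext x
            simp only [Set.mem_setOf_eq]
            constructor
            · rintro ⟨hxS, hx⟩
              refine ⟨hxS, (hadj w x).2 ⟨hx, ?_, ?_⟩⟩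
              · rintro ⟨rfl, _⟩; exact hne rfl
              · rintro ⟨_, rfl⟩; exact huS hxS
            · rintro ⟨hxS, hx⟩
              exact ⟨hxS, ((hadj w x).1 hx).1⟩
          rw [hset]; exact h w hw
      · have hset : {x ∈ S | G.Adj w x} = {x ∈ S | G'.Adj w x} := by
          ext x
          simp only [Set.mem_setOf_eq]
          constructor
          · rintro ⟨hxS, hx⟩
            refine ⟨hxS, (hadj w x).2 ⟨hx, ?_, ?_⟩⟩
            · rintro ⟨rfl, _⟩; exact hwu rfl
            · rintro ⟨rfl, _⟩; exact hwv rfl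
          · rintro ⟨hxS, hx⟩
            exact ⟨hxS, ((hadj w x).1 hx).1⟩
        rw [hset]; exact h w hw

/-- Deleting the edge between two adjacent true twins `u, v` (vertices with
`N(u)∖{v} = N(v)∖{u}`) does not decrease the number of maximal generalized
induced matchings. -/
theorem stmt_14 {V : Type*} [Fintype V] (G : SimpleGraph V) (u v : V)
    (huv : G.Adj u v)
    (htwin : G.neighborSet u \ {v} = G.neighborSet v \ {u}) :
    M1 G ≤ M1 (G.deleteEdges {s(u, v)}) := by
  have key := gim_iff G u v huv htwin
  have hset : {S : Set V | GIM G S ∧ ∀ T : Set V, S ⊂ T → ¬ GIM G T}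
      = {S : Set V | GIM (G.deleteEdges {s(u, v)}) S ∧
          ∀ T : Set V, S ⊂ T → ¬ GIM (G.deleteEdges {s(u, v)}) T} := by
    ext S
    simp only [Set.mem_setOf_eq]
    constructor
    · rintro ⟨h1, h2⟩
      exact ⟨(key S).1 h1, fun T hT hGT => h2 T hT ((key T).2 hGT)⟩
    · rintro ⟨h1, h2⟩
      exact ⟨(key S).2 h1, fun T hT hGT => h2 T hT ((key T).1 hGT)⟩
  unfold M1
  rw [hset]
end

section
/- Let c ≥ 1 and let G be a finite simple graph on n vertices whose complement is c-closed. Suppose M₀ ∈ ℕ is such that every finite simple graph on at most c−1 vertices has at most M₀ maximal independent sets. Then the number of maximal induced stars of G is at most n^3 · M₀. -/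
/-- `S` is a maximal independent set of `G`: it is independent and no strict
superset of it is independent. -/
def IsMaxIndep {V : Type*} (G : SimpleGraph V) (S : Set V) : Prop :=
  (∀ u ∈ S, ∀ v ∈ S, ¬ G.Adj u v) ∧
  ∀ T : Set V, S ⊂ T → ¬ (∀ u ∈ T, ∀ v ∈ T, ¬ G.Adj u v)

/-- `S` induces a star in `G`: there is a vertex `v ∈ S` such that `S ∖ {v}`
is an independent set of `G`. -/
def IsStar {V : Type*} (G : SimpleGraph V) (S : Set V) : Prop :=
  ∃ v ∈ S, ∀ a ∈ S \ {v}, ∀ b ∈ S \ {v}, ¬ G.Adj a b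

/-! ### Auxiliary definitions for the proof -/

/-- The collection of maximal independent sets of `G` inside the set `W`. -/
def starMIS {V : Type*} (G : SimpleGraph V) (W : Set V) : Set (Set V) :=
  {Q | Q ⊆ W ∧ (∀ a ∈ Q, ∀ b ∈ Q, ¬ G.Adj a b) ∧ ∀ x ∈ W, x ∉ Q → ∃ a ∈ Q, G.Adj x a}

/-- Common non-neighbourhood of `u` and `z`, with `v` removed. -/
def starWset {V : Type*} (G : SimpleGraph V) (u z v : V) : Set V :=
  (Gᶜ.neighborSet u ∩ Gᶜ.neighborSet z) \ {v}

/-- Reconstruction of the "z-adjacent" part of the leaf set. -/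
def starRset {V : Type*} (G : SimpleGraph V) (v u z : V) (Q : Set V) : Set V :=
  {y | y ≠ v ∧ G.Adj y z ∧ (∀ q ∈ Q, ¬ G.Adj y q) ∧ (y = u ∨ ¬ G.Adj u y)}

lemma star_aux_biUnion {α β : Type*} [Finite β] (T : Finset α) (F : α → Set β) :
    (⋃ a ∈ T, F a).ncard ≤ ∑ a ∈ T, (F a).ncard := by
  classical
  induction T using Finset.induction_on with
  | empty => simp
  | insert _ _ h ih =>
      rw [Finset.set_biUnion_insert, Finset.sum_insert h]
      exact (Set.ncard_union_le _ _).trans (by omega)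

lemma star_aux_transfer {V : Type*} [Fintype V] (G : SimpleGraph V) (c M₀ : ℕ)
    (hM₀ : ∀ (j : ℕ) (H : SimpleGraph (Fin j)), j ≤ c - 1 →
      {S : Set (Fin j) | IsMaxIndep H S}.ncard ≤ M₀)
    (W : Set V) (hW : W.ncard ≤ c - 1) :
    (starMIS G W).ncard ≤ M₀ := by
  classical
  haveI : Fintype W := (Set.toFinite W).fintype
  have hjc : Fintype.card W ≤ c - 1 := by
    rw [← Nat.card_eq_fintype_card, Nat.card_coe_set_eq]; exact hW
  set j := Fintype.card W with hj
  let e : ↥W ≃ Fin j := Fintype.equivFin ↥W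
  let H : SimpleGraph (Fin j) :=
    { Adj := fun a b => G.Adj (e.symm a) (e.symm b)
      symm := ⟨fun a b h => G.symm.symm _ _ h⟩
      loopless := ⟨fun a h => G.loopless.irrefl _ h⟩ }
  have hAdj : ∀ a b : Fin j, H.Adj a b ↔ G.Adj (e.symm a) (e.symm b) := fun _ _ => Iff.rfl
  have hmain : ∀ Q ∈ starMIS G W,
      ({a : Fin j | (↑(e.symm a) : V) ∈ Q} : Set (Fin j)) ∈
        {S : Set (Fin j) | IsMaxIndep H S} := by
    rintro Q ⟨hQW, hQind, hQmax⟩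
    constructor
    · intro a ha b hb hab
      exact hQind _ ha _ hb hab
    · intro T hT hTind
      obtain ⟨x, hxT, hxQ⟩ := Set.exists_of_ssubset hT
      have hxW : (↑(e.symm x) : V) ∈ W := (e.symm x).2
      obtain ⟨a, haQ, hax⟩ := hQmax _ hxW hxQ
      have haW : a ∈ W := hQW haQ
      have hbQ : (↑(e.symm (e ⟨a, haW⟩)) : V) ∈ Q := by
        rw [Equiv.symm_apply_apply]; exact haQ
      have hbT : e ⟨a, haW⟩ ∈ T := hT.subset hbQ
      refine hTind x hxT (e ⟨a, haW⟩) hbT ?_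
      rw [hAdj, Equiv.symm_apply_apply]
      exact hax
  have hinj : Set.InjOn (fun Q => ({a : Fin j | (↑(e.symm a) : V) ∈ Q} : Set (Fin j)))
      (starMIS G W) := by
    intro Q₁ h₁ Q₂ h₂ heq
    have key : ∀ (Q Q' : Set V), Q ⊆ W →
        ({a : Fin j | (↑(e.symm a) : V) ∈ Q} : Set (Fin j)) =
          {a : Fin j | (↑(e.symm a) : V) ∈ Q'} → Q ⊆ Q' := by
      intro Q Q' hQW hQQ' x hx
      have hxW : x ∈ W := hQW hx
      have h1 : e ⟨x, hxW⟩ ∈ ({a : Fin j | (↑(e.symm a) : V) ∈ Q} : Set (Fin j)) := by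
        show (↑(e.symm (e ⟨x, hxW⟩)) : V) ∈ Q
        rw [Equiv.symm_apply_apply]; exact hx
      rw [hQQ'] at h1
      have h2 : (↑(e.symm (e ⟨x, hxW⟩)) : V) ∈ Q' := h1
      rwa [Equiv.symm_apply_apply] at h2
    exact Set.Subset.antisymm (key Q₁ Q₂ h₁.1 heq) (key Q₂ Q₁ h₂.1 heq.symm)
  exact le_trans
    (Set.ncard_le_ncard_of_injOn _ hmain hinj (Set.toFinite _)) (hM₀ j H hjc)

lemma star_aux_structure {V : Type*} [Fintype V] (G : SimpleGraph V) (S : Set V)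
    (hstar : IsStar G S) (hmax : ∀ T : Set V, S ⊂ T → ¬ IsStar G T) :
    S = Set.univ ∨ ∃ v z u, v ≠ z ∧ G.Adj z u ∧
      ∃ Q ∈ starMIS G (starWset G u z v), S = insert v (Q ∪ starRset G v u z Q) := by
  classical
  obtain ⟨v, hvS, hind⟩ := hstar
  set I : Set V := S \ {v} with hIdef
  have hIS : I ⊆ S := Set.diff_subset
  have hS_eq : S = insert v I := by
    rw [hIdef, Set.insert_diff_singleton, Set.insert_eq_self.mpr hvS]
  have key0 : ∀ z, z ∉ S → ∃ u ∈ I, G.Adj z u := by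
    intro z hz
    have hns := hmax _ (Set.ssubset_insert hz)
    have hnot : ¬ ∀ a ∈ insert z S \ {v}, ∀ b ∈ insert z S \ {v}, ¬ G.Adj a b :=
      fun h => hns ⟨v, Set.mem_insert_iff.mpr (Or.inr hvS), h⟩
    push_neg at hnot
    obtain ⟨a, ha, b, hb, hab⟩ := hnot
    obtain ⟨ha1, ha2⟩ := ha
    obtain ⟨hb1, hb2⟩ := hb
    rcases Set.mem_insert_iff.mp ha1 with haz | haS
    · rcases Set.mem_insert_iff.mp hb1 with hbz | hbS
      · exact absurd hab (by rw [haz, hbz]; exact G.loopless.irrefl z)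
      · exact ⟨b, ⟨hbS, hb2⟩, haz ▸ hab⟩
    · rcases Set.mem_insert_iff.mp hb1 with hbz | hbS
      · exact ⟨a, ⟨haS, ha2⟩, (hbz ▸ hab).symm⟩
      · exact absurd hab (hind a ⟨haS, ha2⟩ b ⟨hbS, hb2⟩)
  by_cases hSuniv : S = Set.univ
  · exact Or.inl hSuniv
  right
  have hZne : {w : V | w ∉ S}.Nonempty := by
    by_contra h
    push_neg at h
    refine hSuniv (Set.eq_univ_of_forall fun x => ?_)
    by_contra hx
    exact Set.eq_empty_iff_forall_notMem.mp h x hx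
  obtain ⟨z, hzZ, hzmin⟩ :=
    Set.exists_min_image {w : V | w ∉ S} (fun w => (G.neighborSet w ∩ I).ncard)
      (Set.toFinite _) hZne
  have hznS : z ∉ S := hzZ
  obtain ⟨u, huI, hzu⟩ := key0 z hznS
  set Q : Set V := I \ G.neighborSet z with hQdef
  set R : Set V := I ∩ G.neighborSet z with hRdef
  have huR : u ∈ R := ⟨huI, hzu⟩
  have hIQR : I = Q ∪ R := (Set.diff_union_inter I (G.neighborSet z)).symm
  -- Q lands in the small window
  have hQW : Q ⊆ starWset G u z v := by
    rintro q ⟨hqI, hqz⟩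
    have hquNe : u ≠ q := fun h => hqz (h ▸ hzu)
    have hqzNe : z ≠ q := fun h => hznS (h ▸ hIS hqI)
    refine ⟨⟨?_, ?_⟩, hqI.2⟩
    · exact (SimpleGraph.compl_adj G u q).mpr ⟨hquNe, hind u huI q hqI⟩
    · exact (SimpleGraph.compl_adj G z q).mpr ⟨hqzNe, fun h => hqz h⟩
  -- Q is a maximal independent set within the window
  have hQmis : Q ∈ starMIS G (starWset G u z v) := by
    refine ⟨hQW, fun a ha b hb => hind a ha.1 b hb.1, ?_⟩
    intro x hxW hxQ
    by_contra hno
    push_neg at hno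
    obtain ⟨⟨hxu, hxz⟩, hxv⟩ := hxW
    have hxzAdj : ¬ G.Adj z x := ((SimpleGraph.compl_adj G z x).mp hxz).2
    have hxuAdj : ¬ G.Adj u x := ((SimpleGraph.compl_adj G u x).mp hxu).2
    have hxI : x ∉ I := fun hxI => hxQ ⟨hxI, fun hmem => hxzAdj hmem⟩
    have hxS : x ∉ S := by
      rw [hS_eq]
      rintro (h | h)
      · exact hxv h
      · exact hxI h
    have hmin := hzmin x hxS
    have hsub : G.neighborSet x ∩ I ⊆ R \ {u} := by
      rintro i ⟨hix, hiI⟩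
      have hiR : i ∈ G.neighborSet z := by
        by_contra hiz
        exact hno i ⟨hiI, hiz⟩ hix
      refine ⟨⟨hiI, hiR⟩, ?_⟩
      intro hiu
      rw [Set.mem_singleton_iff] at hiu
      exact hxuAdj ((hiu ▸ hix : u ∈ G.neighborSet x)).symm
    have h1 : (G.neighborSet x ∩ I).ncard ≤ (R \ {u}).ncard :=
      Set.ncard_le_ncard hsub (Set.toFinite _)
    have h2 : (R \ {u}).ncard < R.ncard := by
      refine Set.ncard_lt_ncard ?_ (Set.toFinite _)
      refine (Set.ssubset_iff_subset_ne).mpr ⟨Set.diff_subset, fun h => ?_⟩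
      exact ((h.symm ▸ huR : u ∈ R \ {u})).2 rfl
    have h3 : R.ncard = (G.neighborSet z ∩ I).ncard := by
      rw [hRdef, Set.inter_comm]
    omega
  -- R is reconstructible
  have hReq : R = starRset G v u z Q := by
    apply Set.Subset.antisymm
    · rintro r ⟨hrI, hrz⟩
      refine ⟨hrI.2, (hrz : G.Adj z r).symm, fun q hq => hind r hrI q hq.1, ?_⟩
      by_cases hru : r = u
      · exact Or.inl hru
      · exact Or.inr (hind u huI r hrI)
    · rintro y ⟨hyv, hyz, hyQ, hyu⟩
      by_cases hyR : y ∈ R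
      · exact hyR
      exfalso
      have hyI : y ∉ I := fun h => hyR ⟨h, hyz.symm⟩
      have hyS : y ∉ S := by
        rw [hS_eq]
        rintro (h | h)
        · exact hyv h
        · exact hyI h
      have hmin := hzmin y hyS
      have hsub2 : G.neighborSet y ∩ I ⊆ R := by
        rintro i ⟨hiy, hiI⟩
        refine ⟨hiI, ?_⟩
        by_contra hiz
        exact hyQ i ⟨hiI, hiz⟩ hiy
      have heq : G.neighborSet y ∩ I = R := by
        refine Set.eq_of_subset_of_ncard_le hsub2 ?_ (Set.toFinite _)
        calc R.ncard = (G.neighborSet z ∩ I).ncard := by rw [hRdef, Set.inter_comm]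
          _ ≤ (G.neighborSet y ∩ I).ncard := hmin
      have huy : u ∈ G.neighborSet y ∩ I := heq.symm ▸ huR
      have hAdjyu : G.Adj y u := huy.1
      rcases hyu with h | h
      · exact G.loopless.irrefl u (h ▸ hAdjyu)
      · exact h hAdjyu.symm
  refine ⟨v, z, u, fun h => hznS (h ▸ hvS), hzu, Q, hQmis, ?_⟩
  rw [hS_eq, hIQR, hReq]

/-- If every graph on at most `c-1` vertices has at most `M₀` maximal
independent sets, then the complement `G` of a `c`-closed graph on `n`
vertices has at most `n^3 · M₀` maximal induced stars. -/
theorem stmt_16 {V : Type*} [Fintype V] (G : SimpleGraph V) (c n M₀ : ℕ)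
    (hc : 1 ≤ c) (hn : Fintype.card V = n)
    (hclosed : CClosed Gᶜ c)
    (hM₀ : ∀ (j : ℕ) (H : SimpleGraph (Fin j)), j ≤ c - 1 →
      {S : Set (Fin j) | IsMaxIndep H S}.ncard ≤ M₀) :
    {S : Set V | IsStar G S ∧ ∀ T : Set V, S ⊂ T → ¬ IsStar G T}.ncard
      ≤ n ^ 3 * M₀ := by
  classical
  subst hn
  by_cases hem : IsEmpty V
  · have hempty : {S : Set V | IsStar G S ∧ ∀ T : Set V, S ⊂ T → ¬ IsStar G T} = ∅ := by
      refine Set.eq_empty_iff_forall_notMem.mpr fun S hS => ?_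
      obtain ⟨⟨w, _, _⟩, _⟩ := hS
      exact hem.elim w
    rw [hempty, Set.ncard_empty]
    exact Nat.zero_le _
  haveI : Nonempty V := not_isEmpty_iff.mp hem
  have hpos : 1 ≤ Fintype.card V := Fintype.card_pos
  set n := Fintype.card V with hndef
  -- M₀ ≥ 1
  have hM1 : 1 ≤ M₀ := by
    have h0 := hM₀ 0 ⊥ (Nat.zero_le _)
    have hset : {S : Set (Fin 0) | IsMaxIndep ⊥ S} = {∅} := by
      refine Set.eq_singleton_iff_unique_mem.mpr ⟨⟨?_, ?_⟩, fun S _ => Set.eq_empty_of_isEmpty S⟩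
      · intro a ha
        exact absurd ha (Set.notMem_empty a)
      · intro T hT
        rw [Set.eq_empty_of_isEmpty T] at hT
        exact absurd rfl hT.ne
    rw [hset, Set.ncard_singleton] at h0
    exact h0
  set Tfin : Finset ((V × V) × V) :=
    Finset.univ.filter (fun p => p.1.1 ≠ p.1.2 ∧ G.Adj p.1.2 p.2) with hTdef
  set F : ((V × V) × V) → Set (Set V) := fun p =>
    (fun Q => insert p.1.1 (Q ∪ starRset G p.1.1 p.2 p.1.2 Q)) ''
      (starMIS G (starWset G p.2 p.1.2 p.1.1)) with hFdef
  have hcover : {S : Set V | IsStar G S ∧ ∀ T : Set V, S ⊂ T → ¬ IsStar G T} ⊆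
      insert Set.univ (⋃ p ∈ Tfin, F p) := by
    rintro S ⟨h1, h2⟩
    rcases star_aux_structure G S h1 h2 with h | ⟨v, z, u, hvz, hzu, Q, hQ, hSeq⟩
    · exact h ▸ Set.mem_insert _ _
    · refine Set.mem_insert_iff.mpr (Or.inr ?_)
      refine Set.mem_iUnion₂.mpr ⟨((v, z), u), ?_, ?_⟩
      · exact Finset.mem_filter.mpr ⟨Finset.mem_univ _, hvz, hzu⟩
      · exact ⟨Q, hQ, hSeq.symm⟩
  have hbound : ∀ p ∈ Tfin, (F p).ncard ≤ M₀ := by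
    intro p hp
    obtain ⟨-, hne, hadj⟩ := Finset.mem_filter.mp hp
    have hW : (starWset G p.2 p.1.2 p.1.1).ncard ≤ c - 1 := by
      have hsub : starWset G p.2 p.1.2 p.1.1 ⊆
          Gᶜ.neighborSet p.2 ∩ Gᶜ.neighborSet p.1.2 := Set.diff_subset
      refine le_trans (Set.ncard_le_ncard hsub (Set.toFinite _)) ?_
      refine hclosed p.2 p.1.2 hadj.ne' ?_
      rw [SimpleGraph.compl_adj]
      rintro ⟨-, h⟩
      exact h hadj.symm
    exact le_trans (Set.ncard_image_le (Set.toFinite _))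
      (star_aux_transfer G c M₀ hM₀ _ hW)
  have hcard : Tfin.card ≤ (n * n - n) * n := by
    have hsub : Tfin ⊆ Finset.univ.offDiag ×ˢ Finset.univ := by
      intro p hp
      obtain ⟨-, hne, -⟩ := Finset.mem_filter.mp hp
      exact Finset.mem_product.mpr
        ⟨Finset.mem_offDiag.mpr ⟨Finset.mem_univ _, Finset.mem_univ _, hne⟩, Finset.mem_univ _⟩
    calc Tfin.card ≤ (Finset.univ.offDiag ×ˢ (Finset.univ : Finset V)).card :=
          Finset.card_le_card hsub
      _ = (n * n - n) * n := by
          rw [Finset.card_product, Finset.offDiag_card, Finset.card_univ]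
  calc {S : Set V | IsStar G S ∧ ∀ T : Set V, S ⊂ T → ¬ IsStar G T}.ncard
      ≤ (insert Set.univ (⋃ p ∈ Tfin, F p)).ncard :=
        Set.ncard_le_ncard hcover (Set.toFinite _)
    _ ≤ (⋃ p ∈ Tfin, F p).ncard + 1 := Set.ncard_insert_le _ _
    _ ≤ (∑ p ∈ Tfin, (F p).ncard) + 1 := by
        exact Nat.add_le_add_right (star_aux_biUnion Tfin F) 1
    _ ≤ (∑ _p ∈ Tfin, M₀) + 1 := by
        exact Nat.add_le_add_right (Finset.sum_le_sum hbound) 1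
    _ = Tfin.card * M₀ + 1 := by rw [Finset.sum_const, smul_eq_mul]
    _ ≤ ((n * n - n) * n) * M₀ + 1 := by
        exact Nat.add_le_add_right (Nat.mul_le_mul_right M₀ hcard) 1
    _ ≤ n ^ 3 * M₀ := by
        have e1 : (n * n - n) * n = n * n * n - n * n := by
          rw [Nat.sub_mul]
        have e2 : n ^ 3 = n * n * n := by ring
        have h4 : n * n ≤ n * n * n := by
          calc n * n = n * n * 1 := by ring
            _ ≤ n * n * n := Nat.mul_le_mul_left _ hpos
        have h5 : 1 ≤ n * n := by
          calc 1 = 1 * 1 := by ring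
            _ ≤ n * n := Nat.mul_le_mul hpos hpos
        have hA : (n * n) * M₀ ≤ (n * n * n) * M₀ := Nat.mul_le_mul_right _ h4
        have hB : 1 ≤ (n * n) * M₀ := by
          calc 1 = 1 * 1 := by ring
            _ ≤ (n * n) * M₀ := Nat.mul_le_mul h5 hM1
        rw [e1, e2, Nat.sub_mul]
        omega
end
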